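/- arXiv:0805.1330 — 11 statements merged into one kernel-verified Lean document; each statement's English description precedes it below -/
import Mathlib

section
/- Let ε > 0, let σ² ≥ 0 and let ν be a nonnegative Borel measure on ℝ with ν({0}) = 0 and ∫ min(1, x²) dν(x) < ∞. Define F(ε) := ε⁻² (σ² + ∫_{[-ε,ε]} x² dν(x)). Then ν(ℝ \ [-2ε, 2ε]) + F(2ε) ≤ ν(ℝ \ [-ε, ε]) + F(ε) ≤ 4 (ν(ℝ \ [-2ε, 2ε]) + F(2ε)). -/
open MeasureTheory Real Set

lemma aux_meas_fin (ν : Measure ℝ)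
    (hνfin : ∫⁻ x, ENNReal.ofReal (min 1 (x ^ 2)) ∂ν < ⊤)
    (e : ℝ) (he : 0 < e) : ν (Icc (-e) e)ᶜ < ⊤ := by
  set c : ENNReal := ENNReal.ofReal (min 1 (e ^ 2)) with hc
  have hc0 : c ≠ 0 := (ENNReal.ofReal_pos.2 (by positivity)).ne'
  have key : c * ν (Icc (-e) e)ᶜ ≤ ∫⁻ x, ENNReal.ofReal (min 1 (x ^ 2)) ∂ν := by
    rw [← setLIntegral_const ((Icc (-e) e)ᶜ) c]
    refine le_trans (setLIntegral_mono (by measurability) ?_) (setLIntegral_le_lintegral _ _)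
    intro x hx
    have hx' : ¬ (-e ≤ x ∧ x ≤ e) := by simpa [mem_Icc] using hx
    have h2 : e ^ 2 ≤ x ^ 2 := by
      rcases not_and_or.1 hx' with h | h <;> push_neg at h <;> nlinarith
    exact ENNReal.ofReal_le_ofReal (min_le_min le_rfl h2)
  by_contra h
  push_neg at h
  have : ν (Icc (-e) e)ᶜ = ⊤ := top_le_iff.1 h
  rw [this, ENNReal.mul_top hc0] at key
  exact (lt_irrefl _ (lt_of_le_of_lt key hνfin)).elim

lemma aux_intOn (ν : Measure ℝ)
    (hνfin : ∫⁻ x, ENNReal.ofReal (min 1 (x ^ 2)) ∂ν < ⊤)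
    (e : ℝ) (he : 0 < e) : IntegrableOn (fun x : ℝ => x ^ 2) (Icc (-e) e) ν := by
  refine ⟨(measurable_id.pow_const 2).aestronglyMeasurable, ?_⟩
  rw [hasFiniteIntegral_def]
  have key : ∫⁻ x in Icc (-e) e, ‖x ^ 2‖₊ ∂ν
      ≤ ENNReal.ofReal (max 1 (e ^ 2)) * ∫⁻ x, ENNReal.ofReal (min 1 (x ^ 2)) ∂ν := by
    rw [← lintegral_const_mul _ (by measurability)]
    refine le_trans (setLIntegral_mono (by measurability) ?_) (setLIntegral_le_lintegral _ _)
    intro x hx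
    have hx' : x ^ 2 ≤ e ^ 2 := by
      rw [mem_Icc] at hx; nlinarith [hx.1, hx.2]
    have h0 : (0:ℝ) ≤ x ^ 2 := sq_nonneg x
    have hnn : (‖x ^ 2‖₊ : ENNReal) = ENNReal.ofReal (x ^ 2) :=
      Real.enorm_eq_ofReal h0
    rw [hnn, ← ENNReal.ofReal_mul (by positivity)]
    refine ENNReal.ofReal_le_ofReal ?_
    rcases le_or_gt (x ^ 2) 1 with h1 | h1
    · rw [min_eq_right h1]
      nlinarith [le_max_left 1 (e ^ 2)]
    · rw [min_eq_left h1.le, mul_one]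
      exact le_trans hx' (le_max_right 1 (e ^ 2))
  exact lt_of_le_of_lt key (ENNReal.mul_lt_top ENNReal.ofReal_lt_top hνfin)

/-- Lemma 5.1 of the paper: with `F(ε) := ε⁻² (σ² + ∫_{[-ε,ε]} x² dν)`, one has
`ν([-2ε,2ε]ᶜ) + F(2ε) ≤ ν([-ε,ε]ᶜ) + F(ε) ≤ 4 (ν([-2ε,2ε]ᶜ) + F(2ε))`. -/
theorem stmt_0 (ε : ℝ) (hε : 0 < ε) (σ2 : ℝ) (hσ2 : 0 ≤ σ2)
    (ν : Measure ℝ) (hν0 : ν {0} = 0)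
    (hνfin : ∫⁻ x, ENNReal.ofReal (min 1 (x ^ 2)) ∂ν < ⊤)
    (F : ℝ → ℝ)
    (hF : ∀ e : ℝ, 0 < e → F e = (e ^ 2)⁻¹ * (σ2 + ∫ x in Icc (-e) e, x ^ 2 ∂ν)) :
    (ν (Icc (-(2 * ε)) (2 * ε))ᶜ).toReal + F (2 * ε)
      ≤ (ν (Icc (-ε) ε)ᶜ).toReal + F ε ∧
    (ν (Icc (-ε) ε)ᶜ).toReal + F ε
      ≤ 4 * ((ν (Icc (-(2 * ε)) (2 * ε))ᶜ).toReal + F (2 * ε)) := by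
  have h2ε : (0:ℝ) < 2 * ε := by linarith
  set T : Set ℝ := Icc (-(2 * ε)) (2 * ε) with hT
  set U : Set ℝ := Icc (-ε) ε with hU
  set S : Set ℝ := T \ U with hS
  have hUT : U ⊆ T := Icc_subset_Icc (by linarith) (by linarith)
  have hUm : MeasurableSet U := measurableSet_Icc
  have hTm : MeasurableSet T := measurableSet_Icc
  have hSm : MeasurableSet S := hTm.diff hUm
  -- finiteness
  have hUfin : ν Uᶜ < ⊤ := aux_meas_fin ν hνfin ε hε
  have hTfin : ν Tᶜ < ⊤ := aux_meas_fin ν hνfin (2 * ε) h2ε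
  have hSU : S ⊆ Uᶜ := fun x hx => hx.2
  have hSfin : ν S < ⊤ := lt_of_le_of_lt (measure_mono hSU) hUfin
  -- decomposition of complement
  have hUc : Uᶜ = S ∪ Tᶜ := by
    ext x
    by_cases h : x ∈ T
    · simp only [hS, mem_compl_iff, mem_union, mem_diff, h, true_and, not_true_eq_false,
        or_false]
    · have : x ∉ U := fun hx => h (hUT hx)
      simp [hS, h, this]
  have hmeas : ν Uᶜ = ν S + ν Tᶜ := by
    rw [hUc, measure_union _ hTm.compl]
    exact disjoint_compl_right.mono_left diff_subset
  have hab : (ν Uᶜ).toReal = (ν S).toReal + (ν Tᶜ).toReal := by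
    rw [hmeas, ENNReal.toReal_add hSfin.ne hTfin.ne]
  -- integrals
  have hintT : IntegrableOn (fun x : ℝ => x ^ 2) T ν := aux_intOn ν hνfin (2 * ε) h2ε
  have hintU : IntegrableOn (fun x : ℝ => x ^ 2) U ν := hintT.mono_set hUT
  have hintS : IntegrableOn (fun x : ℝ => x ^ 2) S ν := hintT.mono_set diff_subset
  have hTsplit : (∫ x in T, x ^ 2 ∂ν) = (∫ x in U, x ^ 2 ∂ν) + ∫ x in S, x ^ 2 ∂ν := by
    rw [← setIntegral_union disjoint_sdiff_right hSm hintU hintS, union_diff_cancel hUT]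
  -- bounds on the annulus integral
  have hSbound : ∀ x ∈ S, ε ^ 2 ≤ x ^ 2 ∧ x ^ 2 ≤ 4 * ε ^ 2 := by
    intro x hx
    rcases hx with ⟨hxT, hxU⟩
    rw [hT, mem_Icc] at hxT
    have hx' : ¬ (-ε ≤ x ∧ x ≤ ε) := by simpa [hU, mem_Icc] using hxU
    constructor
    · rcases not_and_or.1 hx' with h | h <;> push_neg at h <;> nlinarith
    · nlinarith [hxT.1, hxT.2]
  have hconstS : IntegrableOn (fun _ : ℝ => ε ^ 2) S ν :=
    integrableOn_const hSfin.ne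
  have hconstS' : IntegrableOn (fun _ : ℝ => 4 * ε ^ 2) S ν :=
    integrableOn_const hSfin.ne
  have hlow : ε ^ 2 * (ν S).toReal ≤ ∫ x in S, x ^ 2 ∂ν := by
    have := setIntegral_mono_on hconstS hintS hSm (fun x hx => (hSbound x hx).1)
    simpa [mul_comm, measureReal_def] using this
  have hhigh : (∫ x in S, x ^ 2 ∂ν) ≤ 4 * ε ^ 2 * (ν S).toReal := by
    have := setIntegral_mono_on hintS hconstS' hSm (fun x hx => (hSbound x hx).2)
    simpa [mul_comm, measureReal_def] using this
  -- nonnegativity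
  have hI1 : 0 ≤ ∫ x in U, x ^ 2 ∂ν := setIntegral_nonneg hUm (fun x _ => sq_nonneg x)
  have hs0 : 0 ≤ (ν S).toReal := ENNReal.toReal_nonneg
  have hb0 : 0 ≤ (ν Tᶜ).toReal := ENNReal.toReal_nonneg
  -- rewrite F
  rw [hF ε hε, hF (2 * ε) h2ε]
  have hε2 : (0:ℝ) < ε ^ 2 := by positivity
  have h4ε2 : ((2 * ε) ^ 2) = 4 * ε ^ 2 := by ring
  set I1 := ∫ x in U, x ^ 2 ∂ν
  set J := ∫ x in S, x ^ 2 ∂ν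
  set s := (ν S).toReal
  set b := (ν Tᶜ).toReal
  rw [hab, hTsplit, h4ε2]
  have hinv : (4 * ε ^ 2)⁻¹ = (ε ^ 2)⁻¹ / 4 := by
    field_simp
  rw [hinv]
  constructor
  · have h1 : (ε ^ 2)⁻¹ / 4 * J ≤ s := by
      calc (ε ^ 2)⁻¹ / 4 * J ≤ (ε ^ 2)⁻¹ / 4 * (4 * ε ^ 2 * s) :=
            mul_le_mul_of_nonneg_left hhigh (by positivity)
          _ = s := by field_simp
    have h2 : (ε ^ 2)⁻¹ / 4 * (σ2 + I1) ≤ (ε ^ 2)⁻¹ * (σ2 + I1) := by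
      have : (0:ℝ) ≤ (ε ^ 2)⁻¹ * (σ2 + I1) := by positivity
      linarith
    nlinarith [h1, h2]
  · have h1 : s ≤ (ε ^ 2)⁻¹ * J := by
      calc s = (ε ^ 2)⁻¹ * (ε ^ 2 * s) := by field_simp
          _ ≤ (ε ^ 2)⁻¹ * J := mul_le_mul_of_nonneg_left hlow (by positivity)
    have h2 : 4 * ((ε ^ 2)⁻¹ / 4 * (σ2 + (I1 + J))) = (ε ^ 2)⁻¹ * (σ2 + I1) + (ε ^ 2)⁻¹ * J := by
      field_simp; ring
    nlinarith [h1]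
end

section
/- For every real α < 3 there exist constants C₁, C₂ > 0 (depending only on α) such that for every γ > 0: C₁ (e^γ − 1 − γ − γ²/2)/γ ≤ ∫₀¹ (e^{γx} − 1 − γx) x^{−α} dx ≤ C₂ (e^γ − 1 − γ − γ²/2)/γ. -/
open MeasureTheory Real Set

lemma fnn (t : ℝ) : 0 ≤ Real.exp t - 1 - t := by nlinarith [Real.add_one_le_exp t]

lemma h2mono {s t : ℝ} (hs : 0 ≤ s) (hst : s ≤ t) :
    Real.exp s - 1 - s ≤ Real.exp t - 1 - t := by
  have h1 : Real.exp t = Real.exp s * Real.exp (t - s) := by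
    rw [← Real.exp_add]; ring_nf
  nlinarith [Real.add_one_le_exp (t - s), Real.one_le_exp hs, Real.exp_pos s]

lemma auxA {γ : ℝ} (hγ : 0 ≤ γ) : γ * Real.exp (γ/2) + 1 ≤ Real.exp γ := by
  have hd : ∀ t : ℝ, HasDerivAt (fun t : ℝ => Real.exp t - t * Real.exp (t/2) - 1)
      (Real.exp t - (1 * Real.exp (t/2) + t * (Real.exp (t/2) * (1/2)))) t := by
    intro t
    have h1 : HasDerivAt (fun t : ℝ => t / 2) (1/2) t := by
      simpa using (hasDerivAt_id t).div_const 2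
    have h2 : HasDerivAt (fun t : ℝ => Real.exp (t/2)) (Real.exp (t/2) * (1/2)) t := by
      have := (Real.hasDerivAt_exp (t/2)).comp t h1; exact this
    exact ((Real.hasDerivAt_exp t).sub ((hasDerivAt_id t).mul h2)).sub_const 1
  have hmono : Monotone (fun t : ℝ => Real.exp t - t * Real.exp (t/2) - 1) := by
    apply monotone_of_deriv_nonneg
    · intro t; exact (hd t).differentiableAt
    · intro t
      rw [(hd t).deriv]
      have he : Real.exp t = Real.exp (t/2) * Real.exp (t/2) := by
        rw [← Real.exp_add]; ring_nf
      nlinarith [Real.add_one_le_exp (t/2), Real.exp_pos (t/2)]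
  have := hmono hγ
  simp only [Real.exp_zero, zero_mul, mul_zero, sub_zero] at this
  nlinarith [this]

lemma auxB {c T : ℝ} (hc0 : 0 ≤ c) (hc1 : c ≤ 1) (hT : 0 ≤ T) :
    Real.exp (c*T) - 1 - c*T ≤ c^2 * (Real.exp T - 1 - T) := by
  have hd : ∀ t : ℝ, HasDerivAt
      (fun t : ℝ => c^2 * (Real.exp t - 1 - t) - (Real.exp (c*t) - 1 - c*t))
      (c^2 * (Real.exp t - 1) - (Real.exp (c*t) * c - c)) t := by
    intro t
    have h1 : HasDerivAt (fun t : ℝ => c * t) c t := by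
      simpa using (hasDerivAt_id t).const_mul c
    have h2 : HasDerivAt (fun t : ℝ => Real.exp (c*t)) (Real.exp (c*t) * c) t :=
      (Real.hasDerivAt_exp (c*t)).comp t h1
    exact ((((Real.hasDerivAt_exp t).sub_const 1).sub (hasDerivAt_id t)).const_mul
      (c^2)).sub (((h2.sub_const 1).sub h1))
  have hmono : Monotone
      (fun t : ℝ => c^2 * (Real.exp t - 1 - t) - (Real.exp (c*t) - 1 - c*t)) := by
    apply monotone_of_deriv_nonneg
    · intro t; exact (hd t).differentiableAt
    · intro t
      rw [(hd t).deriv]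
      have key : Real.exp (c * t + (1-c) * 0) ≤ c * Real.exp t + (1-c) * Real.exp 0 := by
        have := convexOn_exp.2 (Set.mem_univ t) (Set.mem_univ (0:ℝ)) hc0
          (by linarith : (0:ℝ) ≤ 1 - c) (by ring)
        simpa [smul_eq_mul] using this
      simp only [mul_zero, add_zero, Real.exp_zero, mul_one] at key
      nlinarith [key]
  have := hmono hT
  simp only [mul_zero, Real.exp_zero] at this
  nlinarith [this]


set_option maxHeartbeats 2000000 in
/-- Lemma 5.2, first inequality: for `α < 3` there are constants `C₁, C₂ > 0` such that
for all `γ > 0`,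
`C₁ (e^γ − 1 − γ − γ²/2)/γ ≤ ∫₀¹ (e^{γx} − 1 − γx) x^{−α} dx ≤ C₂ (e^γ − 1 − γ − γ²/2)/γ`. -/
theorem stmt_1 (α : ℝ) (hα : α < 3) :
    ∃ C₁ C₂ : ℝ, 0 < C₁ ∧ 0 < C₂ ∧ ∀ γ : ℝ, 0 < γ →
      C₁ * ((Real.exp γ - 1 - γ - γ ^ 2 / 2) / γ)
          ≤ ∫ x in Ioc (0 : ℝ) 1, (Real.exp (γ * x) - 1 - γ * x) * x ^ (-α) ∧
      ∫ x in Ioc (0 : ℝ) 1, (Real.exp (γ * x) - 1 - γ * x) * x ^ (-α)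
          ≤ C₂ * ((Real.exp γ - 1 - γ - γ ^ 2 / 2) / γ) := by
  have h2pos : (0:ℝ) < (2:ℝ) ^ α := Real.rpow_pos_of_pos two_pos α
  have hmpos : 0 < min 1 ((2:ℝ)^α) := lt_min one_pos h2pos
  have hMpos : (0:ℝ) < max 1 ((2:ℝ)^α) := lt_of_lt_of_le one_pos (le_max_left _ _)
  have h3α : (0:ℝ) < 3 - α := by linarith
  have hKpos : (0:ℝ) < (1/2:ℝ) ^ ((3:ℝ)-α) / (3-α) :=
    div_pos (Real.rpow_pos_of_pos (by norm_num) _) h3α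
  refine ⟨min 1 ((2:ℝ)^α) / 2, 4 * ((1/2:ℝ) ^ ((3:ℝ)-α) / (3-α)) + max 1 ((2:ℝ)^α),
    by positivity, by positivity, ?_⟩
  intro γ hγ
  have hγ' : γ ≠ 0 := ne_of_gt hγ
  have hhalf : ((1/2:ℝ)) ^ (-α) = (2:ℝ)^α := by
    rw [show ((1/2:ℝ)) = 2⁻¹ by norm_num, Real.inv_rpow (by norm_num : (0:ℝ) ≤ 2),
      Real.rpow_neg (by norm_num : (0:ℝ) ≤ 2), inv_inv]
  have hxb : ∀ x : ℝ, x ∈ Ioc (1/2:ℝ) 1 →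
      min 1 ((2:ℝ)^α) ≤ x ^ (-α) ∧ x ^ (-α) ≤ max 1 ((2:ℝ)^α) := by
    intro x hx
    obtain ⟨hx1, hx2⟩ := hx
    have hx0 : (0:ℝ) < x := by linarith
    rcases le_or_gt α 0 with h0 | h0
    · constructor
      · refine le_trans (min_le_right _ _) ?_
        rw [← hhalf]
        exact Real.rpow_le_rpow (by norm_num) hx1.le (by linarith)
      · exact le_trans (Real.rpow_le_one hx0.le hx2 (by linarith)) (le_max_left _ _)
    · constructor
      · exact le_trans (min_le_left _ _)
          (Real.one_le_rpow_of_pos_of_le_one_of_nonpos hx0 hx2 (by linarith))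
      · refine le_trans ?_ (le_max_right _ _)
        rw [← hhalf]
        exact Real.rpow_le_rpow_of_nonpos (by norm_num) hx1.le (by linarith)
  have hcont : Continuous (fun x : ℝ => Real.exp (γ*x) - 1 - γ*x) := by continuity
  have int_f : ∀ a b : ℝ, IntegrableOn (fun x : ℝ => Real.exp (γ*x) - 1 - γ*x) (Ioc a b) :=
    fun a b => hcont.integrableOn_Ioc
  have hfx : ∀ x : ℝ, 0 ≤ Real.exp (γ*x) - 1 - γ*x := fun x => fnn _
  -- value of the unweighted integral
  have hJ : ∫ x in Ioc (0:ℝ) 1, (Real.exp (γ*x) - 1 - γ*x)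
      = (Real.exp γ - 1 - γ - γ^2/2)/γ := by
    rw [← intervalIntegral.integral_of_le (zero_le_one)]
    have hd : ∀ x ∈ uIcc (0:ℝ) 1, HasDerivAt (fun x : ℝ => Real.exp (γ*x)/γ - x - γ*x^2/2)
        (Real.exp (γ*x) - 1 - γ*x) x := by
      intro x _
      have h1 : HasDerivAt (fun x : ℝ => γ * x) γ x := by
        simpa using (hasDerivAt_id x).const_mul γ
      have h2 : HasDerivAt (fun x : ℝ => Real.exp (γ*x)) (Real.exp (γ*x) * γ) x :=
        (Real.hasDerivAt_exp (γ*x)).comp x h1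
      have h3 := ((h2.div_const γ).sub (hasDerivAt_id x)).sub
        (((hasDerivAt_pow 2 x).const_mul γ).div_const 2)
      exact h3.congr_deriv (by field_simp; ring)
    rw [intervalIntegral.integral_eq_sub_of_hasDerivAt hd (hcont.intervalIntegrable 0 1)]
    field_simp
    simp only [mul_zero, Real.exp_zero]; ring
  -- constant integrals
  have hconst : ∀ (c a b : ℝ), a ≤ b → (∫ _ in Ioc a b, c) = (b - a) * c := by
    intro c a b hab
    rw [setIntegral_const, Real.volume_real_Ioc_of_le hab, smul_eq_mul]
  -- J split and bounds
  have low1 : ∫ x in Ioc (0:ℝ) (1/2), (Real.exp (γ*x) - 1 - γ*x)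
      ≤ (1/2) * (Real.exp (γ/2) - 1 - γ/2) := by
    have hb := setIntegral_mono_on (int_f 0 (1/2))
      (integrableOn_const measure_Ioc_lt_top.ne) measurableSet_Ioc
      (fun x hx => h2mono (mul_nonneg hγ.le hx.1.le)
        (show γ*x ≤ γ/2 by nlinarith [hx.2]))
    rwa [hconst _ 0 (1/2) (by norm_num), show ((1:ℝ)/2 - 0) = 1/2 by norm_num] at hb
  have low2 : (1/2) * (Real.exp (γ/2) - 1 - γ/2)
      ≤ ∫ x in Ioc (1/2:ℝ) 1, (Real.exp (γ*x) - 1 - γ*x) := by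
    have hb := setIntegral_mono_on (integrableOn_const measure_Ioc_lt_top.ne)
      (int_f (1/2) 1) measurableSet_Ioc
      (fun x hx => h2mono (by positivity) (show γ/2 ≤ γ*x by nlinarith [hx.1]))
    rwa [hconst _ (1/2) 1 (by norm_num), show ((1:ℝ) - 1/2) = 1/2 by norm_num] at hb
  have hsplitJ : ∫ x in Ioc (0:ℝ) 1, (Real.exp (γ*x) - 1 - γ*x)
      = (∫ x in Ioc (0:ℝ) (1/2), (Real.exp (γ*x) - 1 - γ*x))
        + ∫ x in Ioc (1/2:ℝ) 1, (Real.exp (γ*x) - 1 - γ*x) := by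
    rw [← Set.Ioc_union_Ioc_eq_Ioc (by norm_num : (0:ℝ) ≤ 1/2) (by norm_num : (1/2:ℝ) ≤ 1),
      setIntegral_union (Set.Ioc_disjoint_Ioc_of_le le_rfl) measurableSet_Ioc (int_f 0 (1/2))
        (int_f (1/2) 1)]
  -- F integrability and pointwise bound near 0
  have contF : ContinuousOn (fun x : ℝ => (Real.exp (γ*x) - 1 - γ*x) * x ^ (-α))
      (Ioi (0:ℝ)) := by
    apply ContinuousOn.mul hcont.continuousOn
    exact ContinuousOn.rpow_const continuousOn_id (fun x hx => Or.inl (ne_of_gt hx))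
  have int_F2 : IntegrableOn (fun x : ℝ => (Real.exp (γ*x) - 1 - γ*x) * x ^ (-α))
      (Ioc (1/2:ℝ) 1) := by
    have hsub : Icc (1/2:ℝ) 1 ⊆ Ioi (0:ℝ) := fun x hx => lt_of_lt_of_le (by norm_num) hx.1
    exact ((contF.mono hsub).integrableOn_Icc).mono_set Set.Ioc_subset_Icc_self
  have int_rp : IntegrableOn (fun x : ℝ => x ^ ((2:ℝ)-α)) (Ioc (0:ℝ) (1/2)) := by
    have := intervalIntegral.intervalIntegrable_rpow' (a := 0) (b := 1/2) (r := 2-α) (by linarith)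
    rwa [intervalIntegrable_iff_integrableOn_Ioc_of_le (by norm_num)] at this
  have int_g : IntegrableOn
      (fun x : ℝ => 4*(Real.exp (γ/2) - 1 - γ/2) * x ^ ((2:ℝ)-α)) (Ioc (0:ℝ) (1/2)) :=
    int_rp.const_mul _
  have pw : ∀ x ∈ Ioc (0:ℝ) (1/2), (Real.exp (γ*x) - 1 - γ*x) * x ^ (-α)
      ≤ 4*(Real.exp (γ/2) - 1 - γ/2) * x ^ ((2:ℝ)-α) := by
    intro x hx
    obtain ⟨hx0, hx2⟩ := hx
    have key := auxB (c := 2*x) (T := γ/2) (by linarith) (by linarith) (by positivity)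
    rw [show (2*x)*(γ/2) = γ*x by ring] at key
    have hxe : x ^ ((2:ℝ) - α) = x ^ (2:ℕ) * x ^ (-α) := by
      rw [show (2:ℝ) - α = ((2:ℕ):ℝ) + (-α) by push_cast; ring, Real.rpow_add hx0,
        Real.rpow_natCast]
    have hr : 0 ≤ x ^ (-α) := Real.rpow_nonneg hx0.le _
    calc (Real.exp (γ*x) - 1 - γ*x) * x ^ (-α)
        ≤ ((2*x)^2 * (Real.exp (γ/2) - 1 - γ/2)) * x ^ (-α) :=
          mul_le_mul_of_nonneg_right key hr
      _ = 4*(Real.exp (γ/2) - 1 - γ/2) * x ^ ((2:ℝ)-α) := by rw [hxe]; ring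
  have int_F1 : IntegrableOn (fun x : ℝ => (Real.exp (γ*x) - 1 - γ*x) * x ^ (-α))
      (Ioc (0:ℝ) (1/2)) := by
    apply Integrable.mono' int_g
    · exact (contF.mono (fun x hx => hx.1)).aestronglyMeasurable measurableSet_Ioc
    · filter_upwards [ae_restrict_mem measurableSet_Ioc] with x hx
      rw [Real.norm_eq_abs, abs_of_nonneg (mul_nonneg (hfx x) (Real.rpow_nonneg hx.1.le _))]
      exact pw x hx
  have hsplitF : ∫ x in Ioc (0:ℝ) 1, (Real.exp (γ*x) - 1 - γ*x) * x ^ (-α)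
      = (∫ x in Ioc (0:ℝ) (1/2), (Real.exp (γ*x) - 1 - γ*x) * x ^ (-α))
        + ∫ x in Ioc (1/2:ℝ) 1, (Real.exp (γ*x) - 1 - γ*x) * x ^ (-α) := by
    rw [← Set.Ioc_union_Ioc_eq_Ioc (by norm_num : (0:ℝ) ≤ 1/2) (by norm_num : (1/2:ℝ) ≤ 1),
      setIntegral_union (Set.Ioc_disjoint_Ioc_of_le le_rfl) measurableSet_Ioc int_F1 int_F2]
  -- value of the rpow integral
  have hrpval : ∫ x in Ioc (0:ℝ) (1/2), x ^ ((2:ℝ)-α) = (1/2:ℝ) ^ ((3:ℝ)-α) / (3-α) := by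
    rw [← intervalIntegral.integral_of_le (by norm_num : (0:ℝ) ≤ 1/2),
      integral_rpow (Or.inl (by linarith : (-1:ℝ) < 2-α))]
    rw [Real.zero_rpow (show (2:ℝ)-α+1 ≠ 0 by intro hc; linarith), sub_zero,
      show (2:ℝ)-α+1 = 3-α by ring]
  -- bounds for the two pieces of F
  have p1F_le : ∫ x in Ioc (0:ℝ) (1/2), (Real.exp (γ*x) - 1 - γ*x) * x ^ (-α)
      ≤ 4*(Real.exp (γ/2) - 1 - γ/2) * ((1/2:ℝ) ^ ((3:ℝ)-α) / (3-α)) := by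
    calc ∫ x in Ioc (0:ℝ) (1/2), (Real.exp (γ*x) - 1 - γ*x) * x ^ (-α)
        ≤ ∫ x in Ioc (0:ℝ) (1/2), 4*(Real.exp (γ/2) - 1 - γ/2) * x ^ ((2:ℝ)-α) :=
          setIntegral_mono_on int_F1 int_g measurableSet_Ioc pw
      _ = 4*(Real.exp (γ/2) - 1 - γ/2) * ∫ x in Ioc (0:ℝ) (1/2), x ^ ((2:ℝ)-α) :=
          integral_const_mul _ _
      _ = 4*(Real.exp (γ/2) - 1 - γ/2) * ((1/2:ℝ) ^ ((3:ℝ)-α) / (3-α)) := by rw [hrpval]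
  have p1F_nonneg : 0 ≤ ∫ x in Ioc (0:ℝ) (1/2), (Real.exp (γ*x) - 1 - γ*x) * x ^ (-α) :=
    setIntegral_nonneg measurableSet_Ioc
      (fun x hx => mul_nonneg (hfx x) (Real.rpow_nonneg hx.1.le _))
  have p1J_nonneg : 0 ≤ ∫ x in Ioc (0:ℝ) (1/2), (Real.exp (γ*x) - 1 - γ*x) :=
    setIntegral_nonneg measurableSet_Ioc (fun x _ => hfx x)
  have p2F_le : ∫ x in Ioc (1/2:ℝ) 1, (Real.exp (γ*x) - 1 - γ*x) * x ^ (-α)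
      ≤ max 1 ((2:ℝ)^α) * ∫ x in Ioc (1/2:ℝ) 1, (Real.exp (γ*x) - 1 - γ*x) := by
    have hb := setIntegral_mono_on int_F2 ((int_f (1/2) 1).const_mul (max 1 ((2:ℝ)^α)))
      measurableSet_Ioc (fun x hx => by
        nlinarith [mul_le_mul_of_nonneg_left (hxb x hx).2 (hfx x)])
    rwa [integral_const_mul] at hb
  have p2F_ge : (min 1 ((2:ℝ)^α)) * (∫ x in Ioc (1/2:ℝ) 1, (Real.exp (γ*x) - 1 - γ*x))
      ≤ ∫ x in Ioc (1/2:ℝ) 1, (Real.exp (γ*x) - 1 - γ*x) * x ^ (-α) := by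
    have hb := setIntegral_mono_on ((int_f (1/2) 1).const_mul (min 1 ((2:ℝ)^α)))
      int_F2 measurableSet_Ioc (fun x hx => by
        nlinarith [mul_le_mul_of_nonneg_left (hxb x hx).1 (hfx x)])
    rwa [integral_const_mul] at hb
  -- h ≤ E
  have hA := auxA hγ.le
  have h_le_E : Real.exp (γ/2) - 1 - γ/2 ≤ (Real.exp γ - 1 - γ - γ^2/2)/γ := by
    rw [le_div_iff₀ hγ]; nlinarith [hA]
  have hhnn : 0 ≤ Real.exp (γ/2) - 1 - γ/2 := fnn _
  -- assemble
  constructor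
  · rw [hsplitF]
    have hE2 : (Real.exp γ - 1 - γ - γ^2/2)/γ
        ≤ 2 * ∫ x in Ioc (1/2:ℝ) 1, (Real.exp (γ*x) - 1 - γ*x) := by
      rw [← hJ, hsplitJ]; linarith [low1, low2, p1J_nonneg]
    nlinarith [mul_nonneg hmpos.le (sub_nonneg.2 hE2), p2F_ge, p1F_nonneg]
  · rw [hsplitF]
    have hE3 : ∫ x in Ioc (1/2:ℝ) 1, (Real.exp (γ*x) - 1 - γ*x)
        ≤ (Real.exp γ - 1 - γ - γ^2/2)/γ := by
      rw [← hJ, hsplitJ]; linarith [low1, low2, p1J_nonneg]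
    nlinarith [mul_nonneg (by positivity : (0:ℝ) ≤ 4 * ((1/2:ℝ) ^ ((3:ℝ)-α) / (3-α)))
        (sub_nonneg.2 h_le_E),
      mul_nonneg hMpos.le (sub_nonneg.2 hE3), p1F_le, p2F_le]
end

section
/- For every real α < 2 there exist constants C₁, C₂ > 0 (depending only on α) such that for every γ > 0: C₁ (e^γ − 1 − γ)/γ ≤ ∫₀¹ (e^{γx} − 1) x^{−α} dx ≤ C₂ (e^γ − 1 − γ)/γ. -/
open MeasureTheory Real Set

lemma key_scalar (γ : ℝ) (h : 0 ≤ γ) : γ^2 * Real.exp (γ/2) ≤ 8*(Real.exp γ - 1 - γ) := by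
  set t := γ/2 with ht
  have ht0 : 0 ≤ t := by positivity
  have hq : 1 + t + t^2/2 ≤ Real.exp t := Real.quadratic_le_exp_of_nonneg ht0
  have hγ : γ = 2*t := by rw [ht]; ring
  have he : Real.exp γ = Real.exp t * Real.exp t := by rw [hγ, two_mul, Real.exp_add]
  have h1 : t + 1 ≤ Real.exp t := Real.add_one_le_exp t
  have hpos : 0 < Real.exp t := Real.exp_pos t
  rw [hγ]; rw [hγ] at he; rw [he]
  nlinarith [mul_le_mul_of_nonneg_left hq hpos.le,
    mul_le_mul_of_nonneg_left h1 (by linarith : (0:ℝ) ≤ t + 1), sq_nonneg t]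

lemma exp_integral (γ a b : ℝ) (hγ : γ ≠ 0) :
    ∫ x in a..b, Real.exp (γ * x) = (Real.exp (γ*b) - Real.exp (γ*a)) / γ := by
  rw [intervalIntegral.integral_comp_mul_left (fun x => Real.exp x) hγ, integral_exp]
  field_simp
  rw [smul_eq_mul, ← mul_assoc, mul_one_div_cancel hγ, one_mul]

lemma base_integral (γ : ℝ) (hγ : 0 < γ) :
    ∫ x in Ioc (0:ℝ) 1, (Real.exp (γ * x) - 1) = (Real.exp γ - 1 - γ) / γ := by
  rw [← intervalIntegral.integral_of_le (by norm_num : (0:ℝ) ≤ 1)]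
  have h1 : IntervalIntegrable (fun x => Real.exp (γ*x)) volume 0 1 :=
    (Real.continuous_exp.comp (continuous_const.mul continuous_id)).intervalIntegrable 0 1
  rw [intervalIntegral.integral_sub h1 intervalIntegrable_const, exp_integral γ 0 1 hγ.ne']
  simp
  field_simp

lemma half_integral (γ : ℝ) (hγ : 0 < γ) :
    ∫ x in Ioc (1/2:ℝ) 1, (Real.exp (γ * x) - 1) = (Real.exp γ - Real.exp (γ/2)) / γ - 1/2 := by
  rw [← intervalIntegral.integral_of_le (by norm_num : (1/2:ℝ) ≤ 1)]
  have h1 : IntervalIntegrable (fun x => Real.exp (γ*x)) volume (1/2) 1 :=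
    (Real.continuous_exp.comp (continuous_const.mul continuous_id)).intervalIntegrable _ _
  rw [intervalIntegral.integral_sub h1 intervalIntegrable_const, exp_integral γ _ 1 hγ.ne']
  simp
  field_simp
  ring

lemma exp_sub_one_le (t : ℝ) : Real.exp t - 1 ≤ t * Real.exp t := by
  have h := Real.add_one_le_exp (-t)
  have hp : 0 < Real.exp t := Real.exp_pos t
  have : Real.exp (-t) * Real.exp t = 1 := by rw [← Real.exp_add]; simp
  nlinarith

lemma g_nonneg (γ : ℝ) (hγ : 0 < γ) {x : ℝ} (hx0 : 0 ≤ x) : 0 ≤ Real.exp (γ * x) - 1 := by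
  have : (1:ℝ) = Real.exp 0 := by simp
  rw [this, sub_nonneg]
  exact Real.exp_le_exp.2 (mul_nonneg hγ.le hx0)

lemma f_nonneg (α γ : ℝ) (hγ : 0 < γ) {x : ℝ} (hx : x ∈ Ioc (0:ℝ) 1) :
    0 ≤ (Real.exp (γ * x) - 1) * x ^ (-α) :=
  mul_nonneg (g_nonneg γ hγ hx.1.le) (Real.rpow_nonneg hx.1.le _)

lemma rpow_integrable (α a b : ℝ) (hα : α < 2) (hab : a ≤ b) :
    IntegrableOn (fun x : ℝ => x ^ (1-α)) (Ioc a b) := by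
  rw [← intervalIntegrable_iff_integrableOn_Ioc_of_le hab]
  exact intervalIntegral.intervalIntegrable_rpow' (by linarith)

lemma integrable_f (α γ : ℝ) (hα : α < 2) (hγ : 0 < γ) :
    IntegrableOn (fun x => (Real.exp (γ * x) - 1) * x ^ (-α)) (Ioc (0:ℝ) 1) := by
  have hg : IntegrableOn (fun x : ℝ => γ * Real.exp γ * x ^ (1-α)) (Ioc (0:ℝ) 1) :=
    (rpow_integrable α 0 1 hα (by norm_num)).const_mul _
  rw [IntegrableOn] at hg ⊢
  apply hg.mono
  · apply AEStronglyMeasurable.mul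
    · exact ((Real.continuous_exp.comp (continuous_const.mul continuous_id)).sub
        continuous_const).aestronglyMeasurable.restrict
    · exact (Measurable.aestronglyMeasurable (by fun_prop)).restrict
  · filter_upwards [ae_restrict_mem measurableSet_Ioc] with x hx
    have hx0 : 0 < x := hx.1
    have hx1 : x ≤ 1 := hx.2
    have h1 : Real.exp (γ*x) - 1 ≤ γ * x * Real.exp (γ*x) := exp_sub_one_le _
    have h2 : Real.exp (γ*x) ≤ Real.exp γ := Real.exp_le_exp.2 (by nlinarith)
    have hrw : x * x ^ (-α) = x ^ (1-α) := by
      rw [show (1:ℝ)-α = 1 + -α by ring, Real.rpow_add hx0, Real.rpow_one]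
    rw [Real.norm_of_nonneg (f_nonneg α γ hγ hx), Real.norm_of_nonneg (by positivity)]
    calc (Real.exp (γ*x) - 1) * x ^ (-α) ≤ (γ * x * Real.exp γ) * x ^ (-α) := by
          apply mul_le_mul_of_nonneg_right _ (Real.rpow_nonneg hx0.le _)
          nlinarith [mul_le_mul_of_nonneg_left h2 (mul_nonneg hγ.le hx0.le)]
      _ = γ * Real.exp γ * (x * x ^ (-α)) := by ring
      _ = γ * Real.exp γ * x ^ (1-α) := by rw [hrw]

lemma base_integrable (γ a b : ℝ) :
    IntegrableOn (fun x => (Real.exp (γ * x) - 1)) (Ioc a b) :=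
  ((Real.continuous_exp.comp (continuous_const.mul continuous_id)).sub
    continuous_const).integrableOn_Ioc

/-- Lemma 5.2, second inequality: for `α < 2` there are constants `C₁, C₂ > 0` such that
for all `γ > 0`,
`C₁ (e^γ − 1 − γ)/γ ≤ ∫₀¹ (e^{γx} − 1) x^{−α} dx ≤ C₂ (e^γ − 1 − γ)/γ`. -/
theorem stmt_2 (α : ℝ) (hα : α < 2) :
    ∃ C₁ C₂ : ℝ, 0 < C₁ ∧ 0 < C₂ ∧ ∀ γ : ℝ, 0 < γ →
      C₁ * ((Real.exp γ - 1 - γ) / γ)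
          ≤ ∫ x in Ioc (0 : ℝ) 1, (Real.exp (γ * x) - 1) * x ^ (-α) ∧
      ∫ x in Ioc (0 : ℝ) 1, (Real.exp (γ * x) - 1) * x ^ (-α)
          ≤ C₂ * ((Real.exp γ - 1 - γ) / γ) := by
  by_cases hα0 : 0 ≤ α
  · -- case 0 ≤ α < 2
    have h2α : (0:ℝ) < 2 - α := by linarith
    refine ⟨1, 4 + 8/(2-α), one_pos, by positivity, ?_⟩
    intro γ hγ
    have hJ0 : 0 ≤ (Real.exp γ - 1 - γ)/γ :=
      div_nonneg (by nlinarith [Real.add_one_le_exp γ]) hγ.le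
    have hfi := integrable_f α γ hα hγ
    have hbi : IntegrableOn (fun x => Real.exp (γ*x) - 1) (Ioc (0:ℝ) 1) := base_integrable γ 0 1
    constructor
    · rw [one_mul, ← base_integral γ hγ]
      refine setIntegral_mono_on hbi hfi measurableSet_Ioc ?_
      intro x hx
      have h1 : (1:ℝ) ≤ x ^ (-α) :=
        Real.one_le_rpow_of_pos_of_le_one_of_nonpos hx.1 hx.2 (by linarith)
      nlinarith [g_nonneg γ hγ hx.1.le]
    · have hsplit : (Ioc (0:ℝ) 1) = Ioc (0:ℝ) (1/2) ∪ Ioc (1/2:ℝ) 1 :=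
        (Set.Ioc_union_Ioc_eq_Ioc (by norm_num) (by norm_num)).symm
      have hfi1 : IntegrableOn (fun x => (Real.exp (γ*x)-1)*x^(-α)) (Ioc (0:ℝ) (1/2)) :=
        hfi.mono_set (Ioc_subset_Ioc_right (by norm_num))
      have hfi2 : IntegrableOn (fun x => (Real.exp (γ*x)-1)*x^(-α)) (Ioc (1/2:ℝ) 1) :=
        hfi.mono_set (Ioc_subset_Ioc_left (by norm_num))
      rw [hsplit, setIntegral_union (Set.Ioc_disjoint_Ioc_of_le le_rfl) measurableSet_Ioc hfi1 hfi2]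
      have key2 : γ * Real.exp (γ/2) ≤ 8 * (Real.exp γ - 1 - γ) / γ := by
        rw [le_div_iff₀ hγ]; nlinarith [key_scalar γ hγ.le]
      have hp1 : ∫ x in Ioc (0:ℝ) (1/2), (Real.exp (γ*x)-1)*x^(-α)
          ≤ (8/(2-α)) * ((Real.exp γ - 1 - γ)/γ) := by
        have step1 : ∫ x in Ioc (0:ℝ) (1/2), (Real.exp (γ*x)-1)*x^(-α)
            ≤ ∫ x in Ioc (0:ℝ) (1/2), γ * Real.exp (γ/2) * x^(1-α) := by
          refine setIntegral_mono_on hfi1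
            ((rpow_integrable α 0 (1/2) hα (by norm_num)).const_mul _) measurableSet_Ioc ?_
          intro x hx
          have hx0 : 0 < x := hx.1
          have hx2 : x ≤ 1/2 := hx.2
          have h1 : Real.exp (γ*x) - 1 ≤ γ*x*Real.exp (γ*x) := exp_sub_one_le _
          have h2 : Real.exp (γ*x) ≤ Real.exp (γ/2) := Real.exp_le_exp.2 (by nlinarith)
          have hrw : x * x ^ (-α) = x ^ (1-α) := by
            rw [show (1:ℝ)-α = 1 + -α by ring, Real.rpow_add hx0, Real.rpow_one]
          calc (Real.exp (γ*x)-1)*x^(-α) ≤ (γ*x*Real.exp (γ/2)) * x^(-α) := by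
                apply mul_le_mul_of_nonneg_right _ (Real.rpow_nonneg hx0.le _)
                nlinarith [mul_le_mul_of_nonneg_left h2 (mul_nonneg hγ.le hx0.le)]
            _ = γ * Real.exp (γ/2) * (x * x^(-α)) := by ring
            _ = γ * Real.exp (γ/2) * x^(1-α) := by rw [hrw]
        have step2 : ∫ x in Ioc (0:ℝ) (1/2), γ * Real.exp (γ/2) * x^(1-α)
            = γ * Real.exp (γ/2) * ((1/2:ℝ)^(2-α) / (2-α)) := by
          rw [MeasureTheory.integral_const_mul,
            ← intervalIntegral.integral_of_le (by norm_num : (0:ℝ) ≤ 1/2),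
            integral_rpow (Or.inl (by linarith))]
          rw [Real.zero_rpow (by intro h; nlinarith [h] : (1:ℝ)-α+1 ≠ 0)]
          rw [show (1:ℝ)-α+1 = 2-α by ring]
          ring
        have hc1 : ((1/2:ℝ))^(2-α) ≤ 1 :=
          Real.rpow_le_one (by norm_num) (by norm_num) (by linarith)
        calc ∫ x in Ioc (0:ℝ) (1/2), (Real.exp (γ*x)-1)*x^(-α)
            ≤ γ * Real.exp (γ/2) * ((1/2:ℝ)^(2-α) / (2-α)) := step1.trans step2.le
          _ ≤ γ * Real.exp (γ/2) * (1 / (2-α)) := by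
              gcongr
          _ = (γ * Real.exp (γ/2)) / (2-α) := by ring
          _ ≤ (8 * (Real.exp γ - 1 - γ) / γ) / (2-α) := by gcongr
          _ = (8/(2-α)) * ((Real.exp γ - 1 - γ)/γ) := by ring
      have hp2 : ∫ x in Ioc (1/2:ℝ) 1, (Real.exp (γ*x)-1)*x^(-α)
          ≤ 4 * ((Real.exp γ - 1 - γ)/γ) := by
        have s1 : ∫ x in Ioc (1/2:ℝ) 1, (Real.exp (γ*x)-1)*x^(-α)
            ≤ ∫ x in Ioc (1/2:ℝ) 1, 4*(Real.exp (γ*x)-1) := by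
          refine setIntegral_mono_on hfi2
            ((base_integrable γ (1/2) 1).const_mul 4) measurableSet_Ioc ?_
          intro x hx
          have hx0 : (0:ℝ) < x := lt_trans (by norm_num) hx.1
          have ha : x^(-α) ≤ ((1/2:ℝ))^(-α) :=
            Real.rpow_le_rpow_of_nonpos (by norm_num) hx.1.le (by linarith)
          have hb : ((1/2:ℝ))^(-α) = ((2:ℝ)^(-α))⁻¹ := by
            rw [show (1/2:ℝ) = 2⁻¹ by norm_num, Real.inv_rpow (by norm_num)]
          have hb2 : ((2:ℝ)^(-α))⁻¹ = (2:ℝ)^α := by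
            rw [Real.rpow_neg (by norm_num), inv_inv]
          have hc : (2:ℝ)^α ≤ (2:ℝ)^(2:ℝ) :=
            Real.rpow_le_rpow_of_exponent_le one_le_two hα.le
          have hd : (2:ℝ)^(2:ℝ) = 4 := by
            rw [show (2:ℝ) = ((2:ℕ):ℝ) by norm_num, Real.rpow_natCast]; norm_num
          have hle4 : x^(-α) ≤ 4 := by
            rw [hb, hb2] at ha; rw [hd] at hc; linarith
          nlinarith [g_nonneg γ hγ hx0.le, Real.rpow_nonneg hx0.le (-α)]
        have s2 : ∫ x in Ioc (1/2:ℝ) 1, 4*(Real.exp (γ*x)-1)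
            = 4 * ∫ x in Ioc (1/2:ℝ) 1, (Real.exp (γ*x)-1) :=
          MeasureTheory.integral_const_mul _ _
        have s3 : ∫ x in Ioc (1/2:ℝ) 1, (Real.exp (γ*x)-1)
            ≤ ∫ x in Ioc (0:ℝ) 1, (Real.exp (γ*x)-1) := by
          refine setIntegral_mono_set hbi ?_
            (HasSubset.Subset.eventuallyLE (Ioc_subset_Ioc_left (by norm_num)))
          exact (ae_restrict_mem measurableSet_Ioc).mono fun x hx => g_nonneg γ hγ hx.1.le
        rw [base_integral γ hγ] at s3
        linarith
      linarith
  · -- case α < 0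
    push_neg at hα0
    refine ⟨(2:ℝ)^α/2, 1, by positivity, one_pos, ?_⟩
    intro γ hγ
    have hfi := integrable_f α γ hα hγ
    have hbi : IntegrableOn (fun x => Real.exp (γ*x) - 1) (Ioc (0:ℝ) 1) := base_integrable γ 0 1
    constructor
    · -- lower bound
      have hsub : ∫ x in Ioc (1/2:ℝ) 1, (Real.exp (γ*x)-1)*x^(-α)
          ≤ ∫ x in Ioc (0:ℝ) 1, (Real.exp (γ*x)-1)*x^(-α) := by
        refine setIntegral_mono_set hfi ?_
          (HasSubset.Subset.eventuallyLE (Ioc_subset_Ioc_left (by norm_num)))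
        exact (ae_restrict_mem measurableSet_Ioc).mono fun x hx => f_nonneg α γ hγ hx
      have hmono : ∫ x in Ioc (1/2:ℝ) 1, (2:ℝ)^α*(Real.exp (γ*x)-1)
          ≤ ∫ x in Ioc (1/2:ℝ) 1, (Real.exp (γ*x)-1)*x^(-α) := by
        refine setIntegral_mono_on ((base_integrable γ (1/2) 1).const_mul _)
          (hfi.mono_set (Ioc_subset_Ioc_left (by norm_num))) measurableSet_Ioc ?_
        intro x hx
        have hx0 : (0:ℝ) < x := lt_trans (by norm_num) hx.1
        have ha : ((1/2:ℝ))^(-α) ≤ x^(-α) :=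
          Real.rpow_le_rpow (by norm_num) hx.1.le (by linarith)
        have hb : ((1/2:ℝ))^(-α) = ((2:ℝ)^(-α))⁻¹ := by
          rw [show (1/2:ℝ) = 2⁻¹ by norm_num, Real.inv_rpow (by norm_num)]
        have hb2 : ((2:ℝ)^(-α))⁻¹ = (2:ℝ)^α := by
          rw [Real.rpow_neg (by norm_num), inv_inv]
        have hge : (2:ℝ)^α ≤ x^(-α) := by rw [hb, hb2] at ha; linarith
        nlinarith [g_nonneg γ hγ hx0.le, Real.rpow_pos_of_pos (by norm_num : (0:ℝ) < 2) α]
      have hval : ∫ x in Ioc (1/2:ℝ) 1, (2:ℝ)^α*(Real.exp (γ*x)-1)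
          = (2:ℝ)^α * ((Real.exp γ - Real.exp (γ/2))/γ - 1/2) := by
        rw [MeasureTheory.integral_const_mul, half_integral γ hγ]
      have hexp : Real.exp γ = Real.exp (γ/2) * Real.exp (γ/2) := by
        rw [← Real.exp_add]; congr 1; ring
      have H : Real.exp γ - 1 - γ ≤ 2*(Real.exp γ - Real.exp (γ/2)) - γ := by
        nlinarith [sq_nonneg (Real.exp (γ/2) - 1)]
      have hkey : (Real.exp γ - 1 - γ)/γ/2 ≤ (Real.exp γ - Real.exp (γ/2))/γ - 1/2 := by
        rw [show (Real.exp γ - 1 - γ)/γ/2 = (Real.exp γ - 1 - γ)/(2*γ) by ring]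
        calc (Real.exp γ - 1 - γ)/(2*γ) ≤ (2*(Real.exp γ - Real.exp (γ/2)) - γ)/(2*γ) := by
              gcongr
          _ = (Real.exp γ - Real.exp (γ/2))/γ - 1/2 := by field_simp
      have h2a : (0:ℝ) ≤ (2:ℝ)^α := (Real.rpow_pos_of_pos (by norm_num) α).le
      calc (2:ℝ)^α/2 * ((Real.exp γ - 1 - γ)/γ)
          = (2:ℝ)^α * ((Real.exp γ - 1 - γ)/γ/2) := by ring
        _ ≤ (2:ℝ)^α * ((Real.exp γ - Real.exp (γ/2))/γ - 1/2) :=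
            mul_le_mul_of_nonneg_left hkey h2a
        _ = ∫ x in Ioc (1/2:ℝ) 1, (2:ℝ)^α*(Real.exp (γ*x)-1) := hval.symm
        _ ≤ ∫ x in Ioc (1/2:ℝ) 1, (Real.exp (γ*x)-1)*x^(-α) := hmono
        _ ≤ ∫ x in Ioc (0:ℝ) 1, (Real.exp (γ*x)-1)*x^(-α) := hsub
    · -- upper bound
      rw [one_mul, ← base_integral γ hγ]
      refine setIntegral_mono_on hfi hbi measurableSet_Ioc ?_
      intro x hx
      have h1 : x ^ (-α) ≤ 1 := Real.rpow_le_one hx.1.le hx.2 (by linarith)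
      nlinarith [g_nonneg γ hγ hx.1.le, Real.rpow_nonneg hx.1.le (-α)]
end

section
/- For every real α < 1 there exist constants C₁, C₂ > 0 (depending only on α) such that for every γ > 0: C₁ (e^γ − 1)/γ ≤ ∫₀¹ e^{γx} x^{−α} dx ≤ C₂ (e^γ − 1)/γ. -/
open MeasureTheory Real Set

private lemma int_exp (γ : ℝ) (hγ : γ ≠ 0) (a b : ℝ) :
    ∫ x in a..b, Real.exp (γ * x) = (Real.exp (γ * b) - Real.exp (γ * a)) / γ := by
  rw [show (fun x => Real.exp (γ * x)) = fun x => (fun y => Real.exp y) (γ * x) from rfl,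
    intervalIntegral.integral_comp_mul_left (fun y => Real.exp y) hγ, integral_exp, smul_eq_mul]
  field_simp

private lemma half_rpow (α : ℝ) : ((1/2 : ℝ)) ^ (-α) = (2:ℝ) ^ α := by
  rw [one_div, Real.inv_rpow (by norm_num : (0:ℝ) ≤ 2),
    Real.rpow_neg (by norm_num : (0:ℝ) ≤ 2), inv_inv]

private lemma aux_bounds (α : ℝ) {x : ℝ} (hx : x ∈ Icc (1/2 : ℝ) 1) :
    min 1 ((2:ℝ) ^ α) ≤ x ^ (-α) ∧ x ^ (-α) ≤ max 1 ((2:ℝ) ^ α) := by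
  have hx0 : (0:ℝ) < x := lt_of_lt_of_le (by norm_num) hx.1
  rcases le_or_gt 0 (-α) with h | h
  · constructor
    · calc min 1 ((2:ℝ) ^ α) ≤ (2:ℝ) ^ α := min_le_right _ _
        _ = ((1/2 : ℝ)) ^ (-α) := (half_rpow α).symm
        _ ≤ x ^ (-α) := Real.rpow_le_rpow (by norm_num) hx.1 h
    · calc x ^ (-α) ≤ (1:ℝ) ^ (-α) := Real.rpow_le_rpow hx0.le hx.2 h
        _ = 1 := Real.one_rpow _
        _ ≤ max 1 ((2:ℝ) ^ α) := le_max_left _ _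
  · constructor
    · calc min 1 ((2:ℝ) ^ α) ≤ 1 := min_le_left _ _
        _ = (1:ℝ) ^ (-α) := (Real.one_rpow _).symm
        _ ≤ x ^ (-α) := Real.rpow_le_rpow_of_nonpos hx0 hx.2 h.le
    · calc x ^ (-α) ≤ ((1/2 : ℝ)) ^ (-α) :=
          Real.rpow_le_rpow_of_nonpos (by norm_num) hx.1 h.le
        _ = (2:ℝ) ^ α := half_rpow α
        _ ≤ max 1 ((2:ℝ) ^ α) := le_max_right _ _

/-- Lemma 5.2, third inequality: for `α < 1` there are constants `C₁, C₂ > 0` such that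
for all `γ > 0`, `C₁ (e^γ − 1)/γ ≤ ∫₀¹ e^{γx} x^{−α} dx ≤ C₂ (e^γ − 1)/γ`. -/
theorem stmt_3 (α : ℝ) (hα : α < 1) :
    ∃ C₁ C₂ : ℝ, 0 < C₁ ∧ 0 < C₂ ∧ ∀ γ : ℝ, 0 < γ →
      C₁ * ((Real.exp γ - 1) / γ)
          ≤ ∫ x in Ioc (0 : ℝ) 1, Real.exp (γ * x) * x ^ (-α) ∧
      ∫ x in Ioc (0 : ℝ) 1, Real.exp (γ * x) * x ^ (-α)
          ≤ C₂ * ((Real.exp γ - 1) / γ) := by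
  have h1α : (0:ℝ) < 1 - α := by linarith
  set m : ℝ := min 1 ((2:ℝ) ^ α) with hm
  set M : ℝ := max 1 ((2:ℝ) ^ α) with hM
  set c : ℝ := ((1/2 : ℝ) ^ (1 - α)) / (1 - α) with hcdef
  have hm0 : 0 < m := lt_min one_pos (Real.rpow_pos_of_pos two_pos α)
  have hM0 : 0 < M := lt_of_lt_of_le one_pos (le_max_left _ _)
  have hc0 : 0 < c := div_pos (Real.rpow_pos_of_pos (by norm_num) _) h1α
  refine ⟨m/2, M + 2*c, by positivity, by positivity, fun γ hγ => ?_⟩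
  have hγ' : γ ≠ 0 := ne_of_gt hγ
  -- integrability
  have hI : ∀ a b : ℝ, IntervalIntegrable (fun x => Real.exp (γ * x) * x ^ (-α)) volume a b :=
    fun a b => (intervalIntegral.intervalIntegrable_rpow' (by linarith : (-1:ℝ) < -α)).continuousOn_mul
      ((Real.continuous_exp.comp (continuous_const.mul continuous_id)).continuousOn)
  have hIe : ∀ k a b : ℝ, IntervalIntegrable (fun x => k * Real.exp (γ * x)) volume a b :=
    fun k a b => (Continuous.intervalIntegrable (by continuity) a b)
  have hIr : ∀ k a b : ℝ, IntervalIntegrable (fun x => k * x ^ (-α)) volume a b :=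
    fun k a b => (intervalIntegral.intervalIntegrable_rpow' (by linarith : (-1:ℝ) < -α)).const_mul k
  -- split
  have key : (∫ x in Ioc (0:ℝ) 1, Real.exp (γ * x) * x ^ (-α))
      = (∫ x in (0:ℝ)..(1/2), Real.exp (γ * x) * x ^ (-α))
        + ∫ x in (1/2:ℝ)..1, Real.exp (γ * x) * x ^ (-α) := by
    rw [← intervalIntegral.integral_of_le (by norm_num : (0:ℝ) ≤ 1),
      ← intervalIntegral.integral_add_adjacent_intervals (hI 0 (1/2)) (hI (1/2) 1)]
  set H : ℝ := Real.exp (γ * (1/2)) with hHdef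
  set E : ℝ := Real.exp γ with hEdef
  have hEH : E = H * H := by rw [hEdef, hHdef, ← Real.exp_add]; ring_nf
  have hH1 : 1 + γ/2 ≤ H := by
    have := Real.add_one_le_exp (γ * (1/2))
    rw [← hHdef] at this; linarith
  have hHpos : (0:ℝ) < H := Real.exp_pos _
  -- value of exp integral on [1/2,1]
  have hEint : ∫ x in (1/2:ℝ)..1, Real.exp (γ * x) = (E - H) / γ := by
    rw [int_exp γ hγ' (1/2) 1, mul_one]
  constructor
  · -- lower bound
    have low1 : (0:ℝ) ≤ ∫ x in (0:ℝ)..(1/2), Real.exp (γ * x) * x ^ (-α) :=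
      intervalIntegral.integral_nonneg (by norm_num)
        (fun x hx => mul_nonneg (Real.exp_pos _).le (Real.rpow_nonneg hx.1 _))
    have low2 : m * ((E - H) / γ) ≤ ∫ x in (1/2:ℝ)..1, Real.exp (γ * x) * x ^ (-α) := by
      have mono : (∫ x in (1/2:ℝ)..1, m * Real.exp (γ * x))
          ≤ ∫ x in (1/2:ℝ)..1, Real.exp (γ * x) * x ^ (-α) := by
        refine intervalIntegral.integral_mono_on (by norm_num) (hIe m _ _) (hI _ _) ?_
        intro x hx
        calc m * Real.exp (γ * x) ≤ x ^ (-α) * Real.exp (γ * x) :=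
              mul_le_mul_of_nonneg_right (aux_bounds α hx).1 (Real.exp_pos _).le
          _ = Real.exp (γ * x) * x ^ (-α) := mul_comm _ _
      rwa [intervalIntegral.integral_const_mul, hEint] at mono
    rw [key]
    have hfrac : (m/2) * ((E - 1) / γ) ≤ m * ((E - H) / γ) := by
      rw [show m / 2 * ((E - 1) / γ) = (m * (E - 1) / 2) / γ by ring,
        show m * ((E - H) / γ) = (m * (E - H)) / γ by ring,
        div_le_div_iff_of_pos_right hγ]
      nlinarith [mul_le_mul_of_nonneg_left (show 2 * H ≤ E + 1 by nlinarith [sq_nonneg (H - 1)]) hm0.le]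
    linarith
  · -- upper bound
    have up1 : (∫ x in (0:ℝ)..(1/2), Real.exp (γ * x) * x ^ (-α)) ≤ H * c := by
      have mono : (∫ x in (0:ℝ)..(1/2), Real.exp (γ * x) * x ^ (-α))
          ≤ ∫ x in (0:ℝ)..(1/2), H * x ^ (-α) := by
        refine intervalIntegral.integral_mono_on (by norm_num) (hI _ _) (hIr H _ _) ?_
        intro x hx
        exact mul_le_mul_of_nonneg_right
          (Real.exp_le_exp.2 (by nlinarith [hx.1, hx.2])) (Real.rpow_nonneg hx.1 _)
      have hval : (∫ x in (0:ℝ)..(1/2), x ^ (-α)) = c := by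
        rw [integral_rpow (Or.inl (by linarith : (-1:ℝ) < -α))]
        rw [Real.zero_rpow (by intro h; linarith [h] : -α + 1 ≠ 0), hcdef,
          show -α + 1 = 1 - α by ring]
        ring
      rwa [intervalIntegral.integral_const_mul, hval] at mono
    have up2 : (∫ x in (1/2:ℝ)..1, Real.exp (γ * x) * x ^ (-α)) ≤ M * ((E - H) / γ) := by
      have mono : (∫ x in (1/2:ℝ)..1, Real.exp (γ * x) * x ^ (-α))
          ≤ ∫ x in (1/2:ℝ)..1, M * Real.exp (γ * x) := by
        refine intervalIntegral.integral_mono_on (by norm_num) (hI _ _) (hIe M _ _) ?_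
        intro x hx
        calc Real.exp (γ * x) * x ^ (-α) = x ^ (-α) * Real.exp (γ * x) := mul_comm _ _
          _ ≤ M * Real.exp (γ * x) :=
            mul_le_mul_of_nonneg_right (aux_bounds α hx).2 (Real.exp_pos _).le
      rwa [intervalIntegral.integral_const_mul, hEint] at mono
    rw [key]
    have hfrac : H * c + M * ((E - H) / γ) ≤ (M + 2*c) * ((E - 1) / γ) := by
      rw [show H * c + M * ((E - H) / γ) = (γ * H * c + M * (E - H)) / γ by field_simp,
        show (M + 2*c) * ((E - 1) / γ) = ((M + 2*c) * (E - 1)) / γ by ring,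
        div_le_div_iff_of_pos_right hγ]
      nlinarith [mul_nonneg hM0.le (by linarith : (0:ℝ) ≤ H - 1),
        mul_le_mul_of_nonneg_right (show γ * H ≤ 2 * (E - 1) by nlinarith) hc0.le]
    linarith
end

section
/- For every real α < 2 there exist constants 0 < c ≤ C and γ₀ > 0 such that for all γ ≤ −γ₀: c (−γ) ≤ ∫₀¹ (e^{γx} − 1 − γx) x^{−α} dx ≤ C (−γ). (That is, the integral is weakly asymptotically of order |γ| as γ → −∞; note e^{z} − 1 − z ≥ 0 for all real z, so the integral is nonnegative.) -/
open MeasureTheory Real Set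

/-- Lemma 5.3, first case `α < 2`: as `γ → −∞`,
`∫₀¹ (e^{γx} − 1 − γx) x^{−α} dx ≈ −γ`. -/
theorem stmt_4 (α : ℝ) (hα : α < 2) :
    ∃ c C γ₀ : ℝ, 0 < c ∧ c ≤ C ∧ 0 < γ₀ ∧ ∀ γ : ℝ, γ ≤ -γ₀ →
      c * (-γ) ≤ ∫ x in Ioc (0 : ℝ) 1, (Real.exp (γ * x) - 1 - γ * x) * x ^ (-α) ∧
      ∫ x in Ioc (0 : ℝ) 1, (Real.exp (γ * x) - 1 - γ * x) * x ^ (-α) ≤ C * (-γ) := by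
  have h2 : (0:ℝ) < 2 - α := by linarith
  set m : ℝ := min ((2:ℝ) ^ α) 1 with hm
  have hmpos : 0 < m := lt_min (Real.rpow_pos_of_pos two_pos α) one_pos
  refine ⟨min (m/8) ((2-α)⁻¹), (2-α)⁻¹, 4,
    lt_min (by positivity) (by positivity), min_le_right _ _, by norm_num, ?_⟩
  intro γ hγ
  have hγ4 : 4 ≤ -γ := by linarith
  have hγ0 : γ < 0 := by linarith
  -- pointwise bounds
  have hf0 : ∀ x ∈ Ioc (0:ℝ) 1, 0 ≤ (Real.exp (γ * x) - 1 - γ * x) * x ^ (-α) := by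
    intro x hx
    have h1 := Real.add_one_le_exp (γ * x)
    exact mul_nonneg (by linarith) (Real.rpow_nonneg hx.1.le _)
  have hfle : ∀ x ∈ Ioc (0:ℝ) 1,
      (Real.exp (γ * x) - 1 - γ * x) * x ^ (-α) ≤ (-γ) * x ^ (1 - α) := by
    intro x hx
    have hxp : 0 < x := hx.1
    have he : Real.exp (γ * x) ≤ 1 :=
      Real.exp_le_one_iff.mpr (mul_nonpos_of_nonpos_of_nonneg hγ0.le hxp.le)
    have h1 : (Real.exp (γ * x) - 1 - γ * x) * x ^ (-α) ≤ (-γ * x) * x ^ (-α) :=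
      mul_le_mul_of_nonneg_right (by linarith) (Real.rpow_nonneg hxp.le _)
    have h2' : (-γ * x) * x ^ (-α) = (-γ) * x ^ (1 - α) := by
      rw [mul_assoc]
      congr 1
      rw [show (1:ℝ) - α = 1 + -α by ring, Real.rpow_add hxp, Real.rpow_one]
    linarith [h1, h2'.le]
  -- integrability
  have hg_int : IntegrableOn (fun x : ℝ => (-γ) * x ^ (1-α)) (Ioc (0:ℝ) 1) := by
    have h := intervalIntegral.intervalIntegrable_rpow' (a := 0) (b := 1)
      (r := 1 - α) (by linarith)
    exact ((intervalIntegrable_iff_integrableOn_Ioc_of_le zero_le_one).mp h).const_mul _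
  have hf_meas : AEStronglyMeasurable
      (fun x : ℝ => (Real.exp (γ * x) - 1 - γ * x) * x ^ (-α))
      (volume.restrict (Ioc (0:ℝ) 1)) := by
    apply Measurable.aestronglyMeasurable
    fun_prop
  have hf_int : IntegrableOn
      (fun x : ℝ => (Real.exp (γ * x) - 1 - γ * x) * x ^ (-α)) (Ioc (0:ℝ) 1) := by
    refine Integrable.mono' hg_int hf_meas ?_
    filter_upwards [ae_restrict_mem measurableSet_Ioc] with x hx
    rw [Real.norm_eq_abs, abs_of_nonneg (hf0 x hx)]
    exact hfle x hx
  constructor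
  · -- lower bound
    have hsub : Ioc (1/2:ℝ) 1 ⊆ Ioc (0:ℝ) 1 := Ioc_subset_Ioc (by norm_num) le_rfl
    have hconst : ∀ x ∈ Ioc (1/2:ℝ) 1,
        m * (-γ) / 4 ≤ (Real.exp (γ * x) - 1 - γ * x) * x ^ (-α) := by
      intro x hx
      have hx1 : (1/2:ℝ) < x := hx.1
      have hx2 : x ≤ 1 := hx.2
      have hxpos : (0:ℝ) < x := by linarith
      have hB : m ≤ x ^ (-α) := by
        rcases le_or_gt α 0 with h | h
        · have : ((1/2:ℝ)) ^ (-α) ≤ x ^ (-α) :=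
            Real.rpow_le_rpow (by norm_num) hx1.le (by linarith)
          have heq : ((1/2:ℝ)) ^ (-α) = (2:ℝ) ^ α := by
            rw [one_div, ← Real.rpow_neg_one (2:ℝ), ← Real.rpow_mul (by norm_num)]
            norm_num
          calc m ≤ (2:ℝ) ^ α := min_le_left _ _
            _ = ((1/2:ℝ)) ^ (-α) := heq.symm
            _ ≤ x ^ (-α) := this
        · have : (1:ℝ) ≤ x ^ (-α) :=
            Real.one_le_rpow_of_pos_of_le_one_of_nonpos hxpos hx2 (by linarith)
          calc m ≤ 1 := min_le_right _ _
            _ ≤ x ^ (-α) := this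
      have hA : (-γ) / 4 ≤ Real.exp (γ * x) - 1 - γ * x := by
        have he : 0 ≤ Real.exp (γ * x) := (Real.exp_pos _).le
        nlinarith
      calc m * (-γ) / 4 = ((-γ)/4) * m := by ring
        _ ≤ (Real.exp (γ * x) - 1 - γ * x) * x ^ (-α) :=
          mul_le_mul hA hB hmpos.le (by nlinarith [hA, Real.exp_pos (γ * x)])
    have hstep1 : ∫ x in Ioc (1/2:ℝ) 1, (Real.exp (γ * x) - 1 - γ * x) * x ^ (-α)
        ≤ ∫ x in Ioc (0:ℝ) 1, (Real.exp (γ * x) - 1 - γ * x) * x ^ (-α) := by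
      refine setIntegral_mono_set hf_int ?_ (HasSubset.Subset.eventuallyLE hsub)
      filter_upwards [ae_restrict_mem measurableSet_Ioc] with x hx using hf0 x hx
    have hstep2 : m * (-γ) / 8 ≤
        ∫ x in Ioc (1/2:ℝ) 1, (Real.exp (γ * x) - 1 - γ * x) * x ^ (-α) := by
      have hc : ∫ _x in Ioc (1/2:ℝ) 1, (m * (-γ) / 4) = m * (-γ) / 8 := by
        rw [setIntegral_const, measureReal_def, Real.volume_Ioc]
        rw [smul_eq_mul, ENNReal.toReal_ofReal (by norm_num)]
        ring
      calc m * (-γ) / 8 = ∫ _x in Ioc (1/2:ℝ) 1, (m * (-γ) / 4) := hc.symm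
        _ ≤ _ := setIntegral_mono_on (integrableOn_const (by
              rw [Real.volume_Ioc]; exact ENNReal.ofReal_ne_top))
            (hf_int.mono_set hsub) measurableSet_Ioc hconst
    calc min (m/8) ((2-α)⁻¹) * (-γ) ≤ (m/8) * (-γ) :=
          mul_le_mul_of_nonneg_right (min_le_left _ _) (by linarith)
      _ = m * (-γ) / 8 := by ring
      _ ≤ _ := le_trans hstep2 hstep1
  · -- upper bound
    have hstep : ∫ x in Ioc (0:ℝ) 1, (Real.exp (γ * x) - 1 - γ * x) * x ^ (-α)
        ≤ ∫ x in Ioc (0:ℝ) 1, (-γ) * x ^ (1-α) :=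
      setIntegral_mono_on hf_int hg_int measurableSet_Ioc hfle
    have hcomp : ∫ x in Ioc (0:ℝ) 1, (-γ) * x ^ (1-α) = (2-α)⁻¹ * (-γ) := by
      rw [MeasureTheory.integral_const_mul]
      rw [← intervalIntegral.integral_of_le zero_le_one]
      rw [integral_rpow (Or.inl (by linarith))]
      rw [Real.one_rpow, Real.zero_rpow (by linarith)]
      rw [show (1:ℝ) - α + 1 = 2 - α by ring]
      field_simp
      ring
    linarith [hstep, hcomp.le]
end

section
/- There exist constants 0 < c ≤ C and γ₀ > 1 such that for all γ ≤ −γ₀: c (−γ) log(−γ) ≤ ∫₀¹ (e^{γx} − 1 − γx) x^{−2} dx ≤ C (−γ) log(−γ). (That is, for α = 2 the integral is weakly asymptotically of order |γ| log|γ| as γ → −∞.) -/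
open MeasureTheory Real Set

private lemma quad_bound {z : ℝ} (hz : z ≤ 0) : Real.exp z - 1 - z ≤ z ^ 2 := by
  have h1 : -z + 1 ≤ Real.exp (-z) := Real.add_one_le_exp (-z)
  have h2 : Real.exp z * Real.exp (-z) = 1 := by
    rw [← Real.exp_add]; simp
  have h3 : 0 < Real.exp z := Real.exp_pos z
  nlinarith [pow_nonneg (neg_nonneg.2 hz) 3, sq_nonneg z, mul_le_mul_of_nonneg_left h1 h3.le]

private lemma rpow_neg_two {x : ℝ} (hx : 0 < x) : x ^ (-(2 : ℝ)) = (x ^ 2)⁻¹ := by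
  rw [show (-(2:ℝ)) = -((2:ℕ):ℝ) by norm_num, Real.rpow_neg hx.le, Real.rpow_natCast]

/-- Lemma 5.3, case `α = 2`: as `γ → −∞`,
`∫₀¹ (e^{γx} − 1 − γx) x^{−2} dx ≈ (−γ) log(−γ)`. -/
theorem stmt_5 :
    ∃ c C γ₀ : ℝ, 0 < c ∧ c ≤ C ∧ 1 < γ₀ ∧ ∀ γ : ℝ, γ ≤ -γ₀ →
      c * ((-γ) * Real.log (-γ))
          ≤ ∫ x in Ioc (0 : ℝ) 1, (Real.exp (γ * x) - 1 - γ * x) * x ^ (-(2 : ℝ)) ∧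
      ∫ x in Ioc (0 : ℝ) 1, (Real.exp (γ * x) - 1 - γ * x) * x ^ (-(2 : ℝ))
          ≤ C * ((-γ) * Real.log (-γ)) := by
  refine ⟨1/2, 2, Real.exp 2, by norm_num, by norm_num,
    Real.one_lt_exp_iff.2 (by norm_num), ?_⟩
  intro γ hγ
  set f : ℝ → ℝ := fun x => (Real.exp (γ * x) - 1 - γ * x) * x ^ (-(2 : ℝ)) with hf
  set b : ℝ := -γ with hbdef
  have hb : Real.exp 2 ≤ b := by simpa [hbdef] using neg_le_neg hγ
  have hb0 : (0:ℝ) < b := lt_of_lt_of_le (Real.exp_pos 2) hb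
  have hb1 : (1:ℝ) < b := lt_of_lt_of_le (Real.one_lt_exp_iff.2 (by norm_num)) hb
  have hlogb : (2:ℝ) ≤ Real.log b := by
    rw [show (2:ℝ) = Real.log (Real.exp 2) by simp]
    exact Real.log_le_log (Real.exp_pos 2) hb
  set a : ℝ := b⁻¹ with hadef
  have ha0 : (0:ℝ) < a := inv_pos.2 hb0
  have ha1 : a ≤ 1 := by
    rw [hadef]; exact inv_le_one_of_one_le₀ hb1.le
  -- pointwise facts
  have hγx : ∀ x : ℝ, 0 < x → γ * x ≤ 0 := fun x hx =>
    mul_nonpos_iff.2 (Or.inr ⟨by nlinarith, hx.le⟩)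
  have hfnn : ∀ x ∈ Ioc (0:ℝ) 1, 0 ≤ f x := by
    intro x hx
    have h1 : 0 ≤ Real.exp (γ * x) - 1 - γ * x := by
      nlinarith [Real.add_one_le_exp (γ * x)]
    exact mul_nonneg h1 (Real.rpow_nonneg hx.1.le _)
  have hfbdd : ∀ x ∈ Ioc (0:ℝ) 1, f x ≤ b ^ 2 := by
    intro x hx
    have hx0 := hx.1
    have h1 : Real.exp (γ * x) - 1 - γ * x ≤ (γ * x) ^ 2 := quad_bound (hγx x hx0)
    have h2 : f x ≤ (γ * x) ^ 2 * x ^ (-(2:ℝ)) :=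
      mul_le_mul_of_nonneg_right h1 (Real.rpow_nonneg hx0.le _)
    calc f x ≤ (γ * x) ^ 2 * (x ^ 2)⁻¹ := by rwa [rpow_neg_two hx0] at h2
      _ = γ ^ 2 := by field_simp
      _ = b ^ 2 := by rw [hbdef]; ring
  -- measurability and integrability
  have hmeas : Measurable f := by fun_prop
  have hint : IntegrableOn f (Ioc (0:ℝ) 1) := by
    apply Measure.integrableOn_of_bounded (M := b ^ 2) (by simp)
      hmeas.aestronglyMeasurable
    filter_upwards [ae_restrict_mem measurableSet_Ioc] with x hx
    rw [Real.norm_eq_abs, abs_of_nonneg (hfnn x hx)]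
    exact hfbdd x hx
  have hsub : Ioc a 1 ⊆ Ioc (0:ℝ) 1 := Ioc_subset_Ioc ha0.le le_rfl
  have hint1 : IntegrableOn f (Ioc a 1) := hint.mono_set hsub
  have hint0 : IntegrableOn f (Ioc (0:ℝ) a) :=
    hint.mono_set (Ioc_subset_Ioc le_rfl ha1)
  -- the comparison functions
  set g : ℝ → ℝ := fun x => b * x⁻¹ - (x ^ 2)⁻¹ with hg
  have hne : ∀ x ∈ Icc a (1:ℝ), x ≠ 0 := fun x hx =>
    ne_of_gt (lt_of_lt_of_le ha0 hx.1)
  have hgcont : ContinuousOn g (Icc a 1) := by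
    apply ContinuousOn.sub
    · exact continuousOn_const.mul (continuousOn_id.inv₀ hne)
    · exact ContinuousOn.inv₀ (continuousOn_pow 2) (fun x hx =>
        pow_ne_zero 2 (hne x hx))
  have hintg : IntegrableOn g (Ioc a 1) :=
    (hgcont.integrableOn_Icc).mono_set Ioc_subset_Icc_self
  have hinth : IntegrableOn (fun x : ℝ => b * x⁻¹) (Ioc a 1) := by
    apply (ContinuousOn.integrableOn_Icc ?_).mono_set Ioc_subset_Icc_self
    exact continuousOn_const.mul (continuousOn_id.inv₀ hne)
  have hzero : (0:ℝ) ∉ Set.uIcc a 1 := by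
    rw [Set.uIcc_of_le ha1]
    exact fun h => absurd h.1 (not_le.2 ha0)
  have hloga : Real.log (1 / a) = Real.log b := by
    rw [hadef, one_div, inv_inv]
  -- value of ∫ g over Ioc a 1
  have hgval : ∫ x in Ioc a 1, g x = b * Real.log b - (b - 1) := by
    rw [← intervalIntegral.integral_of_le ha1]
    have e1 : ∫ x in a..1, (x:ℝ)⁻¹ = Real.log b := by
      rw [integral_inv hzero, hloga]
    have e2 : ∫ x in a..1, ((x:ℝ) ^ 2)⁻¹ = b - 1 := by
      have h2 : ∫ x in a..1, (x:ℝ) ^ (-2 : ℤ) = b - 1 := by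
        rw [integral_zpow (Or.inr ⟨by norm_num, hzero⟩)]
        norm_num [hadef]
        ring
      rw [← h2]
      apply intervalIntegral.integral_congr
      intro x hx
      rw [Set.uIcc_of_le ha1] at hx
      have hx0 : x ≠ 0 := ne_of_gt (lt_of_lt_of_le ha0 hx.1)
      show (x ^ 2)⁻¹ = x ^ (-2:ℤ)
      rw [zpow_neg]
      norm_cast
    have hi1 : IntervalIntegrable (fun x : ℝ => b * x⁻¹) volume a 1 := by
      rw [intervalIntegrable_iff_integrableOn_Ioc_of_le ha1]; exact hinth
    have hi2 : IntervalIntegrable (fun x : ℝ => ((x:ℝ) ^ 2)⁻¹) volume a 1 := by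
      rw [intervalIntegrable_iff_integrableOn_Ioc_of_le ha1]
      exact ((ContinuousOn.inv₀ (continuousOn_pow 2) (fun x hx => by
        have : (0:ℝ) < x := lt_of_lt_of_le ha0 hx.1
        positivity)).integrableOn_Icc).mono_set Ioc_subset_Icc_self
    rw [hg]
    rw [intervalIntegral.integral_sub hi1 hi2, intervalIntegral.integral_const_mul, e1, e2]
  -- value of ∫ b/x over Ioc a 1
  have hhval : ∫ x in Ioc a 1, b * x⁻¹ = b * Real.log b := by
    rw [← intervalIntegral.integral_of_le ha1, intervalIntegral.integral_const_mul,
      integral_inv hzero, hloga]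
  have hfx : ∀ x : ℝ, 0 < x → f x = (Real.exp (γ * x) - 1 - γ * x) * (x ^ 2)⁻¹ := by
    intro x hx
    simp only [hf]
    rw [rpow_neg_two hx]
  -- pointwise comparisons on Ioc a 1
  have hlow : ∀ x ∈ Ioc a 1, g x ≤ f x := by
    intro x hx
    have hx0 : (0:ℝ) < x := lt_trans ha0 hx.1
    have h1 : b * x - 1 ≤ Real.exp (γ * x) - 1 - γ * x := by
      have := Real.exp_pos (γ * x)
      rw [hbdef]; nlinarith
    have h2 : g x = (b * x - 1) * (x ^ 2)⁻¹ := by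
      rw [hg]; field_simp
    rw [h2, hfx x hx0]
    exact mul_le_mul_of_nonneg_right h1 (by positivity)
  have hup : ∀ x ∈ Ioc a 1, f x ≤ b * x⁻¹ := by
    intro x hx
    have hx0 : (0:ℝ) < x := lt_trans ha0 hx.1
    have h1 : Real.exp (γ * x) - 1 - γ * x ≤ b * x := by
      have := Real.exp_le_one_iff.2 (hγx x hx0)
      rw [hbdef]; nlinarith
    have h2 : b * x⁻¹ = (b * x) * (x ^ 2)⁻¹ := by field_simp
    rw [hfx x hx0, h2]
    exact mul_le_mul_of_nonneg_right h1 (by positivity)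
  -- bounds
  have key1 : b * Real.log b - (b - 1) ≤ ∫ x in Ioc (0:ℝ) 1, f x := by
    calc b * Real.log b - (b - 1) = ∫ x in Ioc a 1, g x := hgval.symm
      _ ≤ ∫ x in Ioc a 1, f x :=
          setIntegral_mono_on hintg hint1 measurableSet_Ioc hlow
      _ ≤ ∫ x in Ioc (0:ℝ) 1, f x := by
          apply setIntegral_mono_set hint
          · filter_upwards [ae_restrict_mem measurableSet_Ioc] with x hx using hfnn x hx
          · exact HasSubset.Subset.eventuallyLE hsub
  have key2 : ∫ x in Ioc (0:ℝ) 1, f x ≤ b + b * Real.log b := by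
    have hsplit : ∫ x in Ioc (0:ℝ) 1, f x
        = (∫ x in Ioc (0:ℝ) a, f x) + ∫ x in Ioc a 1, f x := by
      rw [← setIntegral_union (Set.Ioc_disjoint_Ioc_of_le le_rfl) measurableSet_Ioc hint0 hint1,
        Set.Ioc_union_Ioc_eq_Ioc ha0.le ha1]
    have h01 : ∫ x in Ioc (0:ℝ) a, f x ≤ b := by
      calc ∫ x in Ioc (0:ℝ) a, f x ≤ ∫ _x in Ioc (0:ℝ) a, b ^ 2 := by
            apply setIntegral_mono_on hint0 (integrableOn_const measure_Ioc_lt_top.ne)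
              measurableSet_Ioc
            intro x hx
            exact hfbdd x ⟨hx.1, le_trans hx.2 ha1⟩
        _ = a * b ^ 2 := by
            rw [setIntegral_const, Real.volume_real_Ioc_of_le ha0.le, smul_eq_mul, sub_zero]
        _ = b := by rw [hadef]; field_simp
    have h02 : ∫ x in Ioc a 1, f x ≤ b * Real.log b := by
      calc ∫ x in Ioc a 1, f x ≤ ∫ x in Ioc a 1, b * x⁻¹ :=
            setIntegral_mono_on hint1 hinth measurableSet_Ioc hup
        _ = b * Real.log b := hhval
    rw [hsplit]; linarith
  constructor
  · have : b ≤ (1/2) * (b * Real.log b) := by nlinarith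
    calc (1/2) * (b * Real.log b) ≤ b * Real.log b - (b - 1) := by nlinarith
      _ ≤ _ := key1
  · calc ∫ x in Ioc (0:ℝ) 1, f x ≤ b + b * Real.log b := key2
      _ ≤ 2 * (b * Real.log b) := by nlinarith
end

section
/- For every real α with 2 < α < 3 there exist constants 0 < c ≤ C and γ₀ > 0 such that for all γ ≤ −γ₀: c (−γ)^{α−1} ≤ ∫₀¹ (e^{γx} − 1 − γx) x^{−α} dx ≤ C (−γ)^{α−1}. (That is, the integral is weakly asymptotically of order |γ|^{α−1} as γ → −∞.) -/
open MeasureTheory Real Set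

lemma aux_exp_quad {z : ℝ} (hz : z ≤ 0) : Real.exp z - 1 - z ≤ z ^ 2 / 2 := by
  have hd : ∀ x : ℝ, HasDerivAt (fun z : ℝ => z ^ 2 / 2 - Real.exp z + 1 + z)
      (x - Real.exp x + 1) x := by
    intro x
    have h1 : HasDerivAt (fun z : ℝ => z ^ 2 / 2) x x := by
      simpa using (hasDerivAt_pow 2 x).div_const 2
    exact ((h1.sub (Real.hasDerivAt_exp x)).add_const 1).add (hasDerivAt_id x)
  have h : AntitoneOn (fun z : ℝ => z ^ 2 / 2 - Real.exp z + 1 + z) (Iic 0) := by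
    apply antitoneOn_of_deriv_nonpos (convex_Iic 0)
    · exact (Continuous.continuousOn (by fun_prop))
    · intro x hx
      exact (hd x).differentiableAt.differentiableWithinAt
    · intro x hx
      rw [(hd x).deriv]
      nlinarith [Real.add_one_le_exp x]
  have := h (show z ∈ Iic 0 from hz) (show (0:ℝ) ∈ Iic 0 from self_mem_Iic) hz
  simp at this
  nlinarith

set_option maxHeartbeats 1000000 in
/-- Lemma 5.3, case `2 < α < 3`: as `γ → −∞`,
`∫₀¹ (e^{γx} − 1 − γx) x^{−α} dx ≈ (−γ)^{α−1}`. -/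
theorem stmt_6 (α : ℝ) (hα1 : 2 < α) (hα2 : α < 3) :
    ∃ c C γ₀ : ℝ, 0 < c ∧ c ≤ C ∧ 0 < γ₀ ∧ ∀ γ : ℝ, γ ≤ -γ₀ →
      c * (-γ) ^ (α - 1)
          ≤ ∫ x in Ioc (0 : ℝ) 1, (Real.exp (γ * x) - 1 - γ * x) * x ^ (-α) ∧
      ∫ x in Ioc (0 : ℝ) 1, (Real.exp (γ * x) - 1 - γ * x) * x ^ (-α)
          ≤ C * (-γ) ^ (α - 1) := by
  have hd2 : (0:ℝ) < α - 2 := by linarith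
  have hd3 : (0:ℝ) < 3 - α := by linarith
  set A : ℝ := 2 ^ (2 - α) with hA_def
  have hApos : 0 < A := Real.rpow_pos_of_pos (by norm_num) _
  have hAlt1 : A < 1 := Real.rpow_lt_one_of_one_lt_of_neg (by norm_num) (by linarith)
  have hne2 : (α:ℝ) - 2 ≠ 0 := ne_of_gt hd2
  have hne3 : (3:ℝ) - α ≠ 0 := ne_of_gt hd3
  refine ⟨A * (1 - A) / (2 * (α - 2)), 1 / (2 * (3 - α)) + 1 / (α - 2), 4, ?_, ?_, by norm_num, ?_⟩
  · exact div_pos (by nlinarith) (by linarith)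
  · have h1 : A * (1 - A) / (2 * (α - 2)) ≤ 1 / (α - 2) := by
      rw [div_le_div_iff₀ (by linarith) hd2]
      nlinarith [mul_nonneg (show (0:ℝ) ≤ 2 - A*(1-A) by nlinarith) hd2.le]
    have h2 : 0 < 1 / (2 * (3 - α)) := by positivity
    linarith
  intro γ hγ
  have hγ0 : γ < 0 := by linarith
  set β : ℝ := -γ with hβ_def
  have hβpos : (0:ℝ) < β := by simp only [hβ_def]; linarith
  have hβ4 : (4:ℝ) ≤ β := by simp only [hβ_def]; linarith
  have hβinv : β * β⁻¹ = 1 := mul_inv_cancel₀ (ne_of_gt hβpos)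
  have hβinvpos : 0 < β⁻¹ := inv_pos.mpr hβpos
  have ha1 : β⁻¹ ≤ 1 := by
    nlinarith [mul_nonneg hβinvpos.le (show (0:ℝ) ≤ β - 1 by linarith)]
  have hb0 : 0 < 2 * β⁻¹ := by positivity
  have hb1 : 2 * β⁻¹ ≤ 1 := by
    nlinarith [mul_nonneg hβinvpos.le (show (0:ℝ) ≤ β - 2 by linarith)]
  have hinv : ∀ y : ℝ, (β⁻¹) ^ y = β ^ (-y) := fun y => by
    rw [Real.inv_rpow hβpos.le, ← Real.rpow_neg hβpos.le]
  set E : ℝ := β ^ (α - 1) with hE_def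
  have hEpos : 0 < E := Real.rpow_pos_of_pos hβpos _
  have hγβ : γ ^ 2 = β ^ 2 := by simp [hβ_def]
  -- rpow splitting identities
  have hxsplit2 : ∀ x : ℝ, 0 < x → x ^ (2 - α) = x ^ 2 * x ^ (-α) := by
    intro x hx
    rw [show (2 - α) = ((2:ℕ):ℝ) + (-α) by push_cast; ring, Real.rpow_add hx,
      Real.rpow_natCast]
  have hxsplit1 : ∀ x : ℝ, 0 < x → x ^ (1 - α) = x * x ^ (-α) := by
    intro x hx
    rw [show (1 - α) = 1 + (-α) by ring, Real.rpow_add hx, Real.rpow_one]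
  -- measurability
  have hfm : Measurable fun x : ℝ => (Real.exp (γ * x) - 1 - γ * x) * x ^ (-α) := by
    fun_prop
  -- nonnegativity
  have hnn : ∀ x ∈ Ioc (0:ℝ) 1, 0 ≤ (Real.exp (γ * x) - 1 - γ * x) * x ^ (-α) := by
    intro x hx
    have h1 := Real.add_one_le_exp (γ * x)
    have h2 : (0:ℝ) ≤ x ^ (-α) := Real.rpow_nonneg hx.1.le _
    nlinarith
  -- quadratic bound
  have hquad : ∀ x ∈ Ioc (0:ℝ) 1, (Real.exp (γ * x) - 1 - γ * x) * x ^ (-α)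
      ≤ γ ^ 2 / 2 * x ^ (2 - α) := by
    intro x hx
    have hx0 := hx.1
    have hz : γ * x ≤ 0 := mul_nonpos_of_nonpos_of_nonneg hγ0.le hx0.le
    have h1 := aux_exp_quad hz
    have h2 : (0:ℝ) ≤ x ^ (-α) := Real.rpow_nonneg hx0.le _
    calc (Real.exp (γ * x) - 1 - γ * x) * x ^ (-α) ≤ ((γ*x)^2/2) * x ^ (-α) :=
          mul_le_mul_of_nonneg_right h1 h2
      _ = γ^2/2 * (x^2 * x^(-α)) := by ring
      _ = γ^2/2 * x^(2-α) := by rw [← hxsplit2 x hx0]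
  -- integrability
  have hint2 : IntegrableOn (fun x : ℝ => x ^ (2 - α)) (Ioc (0:ℝ) 1) := by
    rw [← intervalIntegrable_iff_integrableOn_Ioc_of_le zero_le_one]
    exact intervalIntegral.intervalIntegrable_rpow' (by linarith)
  have hf_int : IntegrableOn (fun x : ℝ => (Real.exp (γ * x) - 1 - γ * x) * x ^ (-α))
      (Ioc (0:ℝ) 1) := by
    refine (hint2.const_mul (γ^2/2)).mono hfm.aestronglyMeasurable.restrict ?_
    rw [ae_restrict_iff' measurableSet_Ioc]
    filter_upwards with x hx
    rw [Real.norm_eq_abs, Real.norm_eq_abs, abs_of_nonneg (hnn x hx)]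
    exact (hquad x hx).trans (le_abs_self _)
  -- exponent identities
  have id1 : β^2 * β^(α-3) = E := by
    rw [hE_def, ← Real.rpow_natCast β 2, ← Real.rpow_add hβpos,
      show ((2:ℕ):ℝ) + (α-3) = α-1 by push_cast; ring]
  have id2 : β * β^(α-2) = E := by
    rw [hE_def, show β * β^(α-2) = β^(1:ℝ) * β^(α-2) by rw [Real.rpow_one],
      ← Real.rpow_add hβpos, show (1:ℝ)+(α-2) = α-1 by ring]
  ------------------------------------------------------------------
  -- Upper bound
  ------------------------------------------------------------------
  have hsplit : (∫ x in Ioc (0:ℝ) 1, (Real.exp (γ * x) - 1 - γ * x) * x ^ (-α))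
      = (∫ x in Ioc (0:ℝ) β⁻¹, (Real.exp (γ * x) - 1 - γ * x) * x ^ (-α))
        + ∫ x in Ioc β⁻¹ 1, (Real.exp (γ * x) - 1 - γ * x) * x ^ (-α) := by
    rw [← Ioc_union_Ioc_eq_Ioc hβinvpos.le ha1,
      setIntegral_union (Ioc_disjoint_Ioc_of_le le_rfl) measurableSet_Ioc
        (hf_int.mono_set (Ioc_subset_Ioc_right ha1))
        (hf_int.mono_set (Ioc_subset_Ioc_left hβinvpos.le))]
  have hup1 : (∫ x in Ioc (0:ℝ) β⁻¹, (Real.exp (γ * x) - 1 - γ * x) * x ^ (-α))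
      ≤ γ^2/2 * (β^(α-3) / (3-α)) := by
    have hs : Ioc (0:ℝ) β⁻¹ ⊆ Ioc 0 1 := Ioc_subset_Ioc_right ha1
    have hb : (∫ x in Ioc (0:ℝ) β⁻¹, (Real.exp (γ * x) - 1 - γ * x) * x ^ (-α))
        ≤ ∫ x in Ioc (0:ℝ) β⁻¹, γ^2/2 * x^(2-α) :=
      setIntegral_mono_on (hf_int.mono_set hs) ((hint2.mono_set hs).const_mul _)
        measurableSet_Ioc (fun x hx => hquad x (hs hx))
    have hc : (∫ x in Ioc (0:ℝ) β⁻¹, γ^2/2 * x^(2-α)) = γ^2/2 * (β^(α-3)/(3-α)) := by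
      rw [MeasureTheory.integral_const_mul]
      congr 1
      rw [← intervalIntegral.integral_of_le hβinvpos.le, integral_rpow (Or.inl (by linarith)),
        Real.zero_rpow (by intro h; linarith : (2-α+1) ≠ 0), hinv,
        show -(2-α+1) = α-3 by ring, show (2-α+1) = 3-α by ring]
      ring
    rw [← hc]; exact hb
  have hint1a : IntegrableOn (fun x:ℝ => x^(1-α)) (Ioc β⁻¹ 1) := by
    rw [← intervalIntegrable_iff_integrableOn_Ioc_of_le ha1]
    exact intervalIntegral.intervalIntegrable_rpow (Or.inr (notMem_uIcc_of_lt hβinvpos one_pos))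
  have hup2 : (∫ x in Ioc β⁻¹ 1, (Real.exp (γ * x) - 1 - γ * x) * x ^ (-α))
      ≤ β * ((β^(α-2) - 1)/(α-2)) := by
    have hptw : ∀ x ∈ Ioc β⁻¹ 1, (Real.exp (γ * x) - 1 - γ * x) * x ^ (-α)
        ≤ β * x^(1-α) := by
      intro x hx
      have hx0 : 0 < x := lt_trans hβinvpos hx.1
      have hz : γ * x ≤ 0 := mul_nonpos_of_nonpos_of_nonneg hγ0.le hx0.le
      have hexp : Real.exp (γ * x) ≤ 1 := by
        rw [← Real.exp_zero]; exact Real.exp_le_exp.mpr hz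
      have h2 : (0:ℝ) ≤ x ^ (-α) := Real.rpow_nonneg hx0.le _
      have hgx : γ * x = -(β*x) := by rw [hβ_def]; ring
      have h1 : Real.exp (γ * x) - 1 - γ * x ≤ β * x := by linarith
      calc (Real.exp (γ * x) - 1 - γ * x) * x ^ (-α) ≤ (β*x) * x^(-α) :=
            mul_le_mul_of_nonneg_right h1 h2
        _ = β * x^(1-α) := by rw [hxsplit1 x hx0]; ring
    have hb : (∫ x in Ioc β⁻¹ 1, (Real.exp (γ * x) - 1 - γ * x) * x ^ (-α))
        ≤ ∫ x in Ioc β⁻¹ 1, β * x^(1-α) :=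
      setIntegral_mono_on (hf_int.mono_set (Ioc_subset_Ioc_left hβinvpos.le))
        (hint1a.const_mul _) measurableSet_Ioc hptw
    have hc : (∫ x in Ioc β⁻¹ 1, β * x^(1-α)) = β * ((β^(α-2) - 1)/(α-2)) := by
      rw [MeasureTheory.integral_const_mul]
      congr 1
      rw [← intervalIntegral.integral_of_le ha1,
        integral_rpow (Or.inr ⟨by intro h; linarith, notMem_uIcc_of_lt hβinvpos one_pos⟩),
        Real.one_rpow, hinv, show -(1-α+1) = α-2 by ring, show (1-α+1) = 2-α by ring]
      rw [div_eq_div_iff (ne_of_lt (by linarith)) hne2]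
      ring
    rw [← hc]; exact hb
  ------------------------------------------------------------------
  -- Lower bound
  ------------------------------------------------------------------
  have hmono : (∫ x in Ioc (2*β⁻¹) 1, (Real.exp (γ * x) - 1 - γ * x) * x ^ (-α))
      ≤ ∫ x in Ioc (0:ℝ) 1, (Real.exp (γ * x) - 1 - γ * x) * x ^ (-α) := by
    apply setIntegral_mono_set hf_int
    · exact (ae_restrict_iff' measurableSet_Ioc).mpr (ae_of_all _ hnn)
    · exact (Ioc_subset_Ioc_left hb0.le).eventuallyLE
  have hlow_int0 : IntegrableOn (fun x:ℝ => x^(1-α)) (Ioc (2*β⁻¹) 1) := by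
    rw [← intervalIntegrable_iff_integrableOn_Ioc_of_le hb1]
    exact intervalIntegral.intervalIntegrable_rpow (Or.inr (notMem_uIcc_of_lt hb0 one_pos))
  have hlow : ∀ x ∈ Ioc (2*β⁻¹) 1, β/2 * x^(1-α)
      ≤ (Real.exp (γ * x) - 1 - γ * x) * x ^ (-α) := by
    intro x hx
    have hx0 : 0 < x := lt_trans hb0 hx.1
    have hβx : 2 ≤ β * x := by
      have h1 : 2*β⁻¹ ≤ x := hx.1.le
      calc (2:ℝ) = β * (2*β⁻¹) := by rw [show β * (2*β⁻¹) = 2*(β*β⁻¹) by ring, hβinv]; ring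
        _ ≤ β * x := mul_le_mul_of_nonneg_left h1 hβpos.le
    have h1 : β*x/2 ≤ Real.exp (γ*x) - 1 - γ*x := by
      have hγx : γ * x = -(β*x) := by rw [hβ_def]; ring
      rw [hγx]
      nlinarith [Real.exp_pos (-(β*x))]
    calc β/2 * x^(1-α) = (β*x/2) * x^(-α) := by rw [hxsplit1 x hx0]; ring
      _ ≤ (Real.exp (γ * x) - 1 - γ * x) * x ^ (-α) :=
        mul_le_mul_of_nonneg_right h1 (Real.rpow_nonneg hx0.le _)
  have h4 : (∫ x in Ioc (2*β⁻¹) 1, β/2 * x^(1-α))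
      ≤ ∫ x in Ioc (2*β⁻¹) 1, (Real.exp (γ * x) - 1 - γ * x) * x ^ (-α) :=
    setIntegral_mono_on (hlow_int0.const_mul _)
      (hf_int.mono_set (Ioc_subset_Ioc_left hb0.le)) measurableSet_Ioc hlow
  have h5 : (∫ x in Ioc (2*β⁻¹) 1, β/2 * x^(1-α)) = β/2 * ((A * β^(α-2) - 1)/(α-2)) := by
    rw [MeasureTheory.integral_const_mul]
    congr 1
    rw [← intervalIntegral.integral_of_le hb1,
      integral_rpow (Or.inr ⟨by intro h; linarith, notMem_uIcc_of_lt hb0 one_pos⟩),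
      Real.one_rpow, show (1-α+1) = 2-α by ring,
      Real.mul_rpow (by norm_num) hβinvpos.le, hinv, show -(2-α) = α-2 by ring, ← hA_def]
    rw [div_eq_div_iff (ne_of_lt (by linarith : (2:ℝ)-α < 0)) hne2]
    ring
  -- key inequality β ≤ A² E
  have hb2 : β^(2-α) ≤ (4:ℝ)^(2-α) :=
    Real.rpow_le_rpow_of_nonpos (by norm_num) hβ4 (by linarith)
  have h42 : (4:ℝ)^(2-α) = A^2 := by
    rw [show (4:ℝ) = 2*2 by norm_num, Real.mul_rpow (by norm_num) (by norm_num), hA_def, sq]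
  have hEβ : E * β^(2-α) = β := by
    rw [hE_def, ← Real.rpow_add hβpos, show (α-1)+(2-α) = 1 by ring, Real.rpow_one]
  have hkey : β ≤ A^2 * E := by
    calc β = E * β^(2-α) := hEβ.symm
      _ ≤ E * (4:ℝ)^(2-α) := mul_le_mul_of_nonneg_left hb2 hEpos.le
      _ = A^2 * E := by rw [h42]; ring
  have e4 : β/2*((A*β^(α-2)-1)/(α-2)) = (A*E - β)/(2*(α-2)) := by
    rw [show β/2*((A*β^(α-2)-1)/(α-2)) = (A*(β*β^(α-2)) - β)/(2*(α-2)) by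
      field_simp, id2]
  have hfin : (A*(1-A)/(2*(α-2))) * E ≤ (A*E - β)/(2*(α-2)) := by
    rw [div_mul_eq_mul_div, div_le_div_iff₀ (by linarith) (by linarith)]
    nlinarith [hkey, hEpos]
  -- combine
  have e1 : γ^2/2*(β^(α-3)/(3-α)) = E/(2*(3-α)) := by
    rw [hγβ, show β^2/2*(β^(α-3)/(3-α)) = (β^2*β^(α-3))/(2*(3-α)) by field_simp, id1]
  have e2 : β*((β^(α-2)-1)/(α-2)) = (E-β)/(α-2) := by
    rw [show β*((β^(α-2)-1)/(α-2)) = (β*β^(α-2)-β)/(α-2) by field_simp, id2]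
  have e3 : (E-β)/(α-2) ≤ E/(α-2) := by
    rw [div_le_div_iff₀ (by linarith) (by linarith)]
    nlinarith [mul_nonneg hβpos.le hd2.le]
  have eC : (1/(2*(3-α)) + 1/(α-2)) * E = E/(2*(3-α)) + E/(α-2) := by ring
  constructor
  · linarith [hfin, h4, h5, hmono, e4]
  · linarith [hsplit, hup1, hup2, e1, e2, e3, eC]
end

section
/- Let ε > 0, let c ≠ 0 be a real number, and let ν be a nonnegative Borel measure on ℝ with ν({0}) = 0, ν(ℝ \ [−ε, ε]) = 0 and ∫ |x| dν(x) ≤ |c|/2. Let u ∈ ℝ satisfy c + ∫ e^{ux} x dν(x) = 0, and define Λ(u) := c·u + ∫ (e^{ux} − 1) dν(x). Then |c·u| ≤ −4 Λ(u). -/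
open MeasureTheory Real Set

-- k(t) = t e^t - e^t + 1 ≥ 0
lemma aux_k_nonneg (t : ℝ) : 0 ≤ t * Real.exp t - Real.exp t + 1 := by
  have h := Real.add_one_le_exp (-t)
  have he : (0:ℝ) < Real.exp t := Real.exp_pos t
  have hm : Real.exp t * Real.exp (-t) = 1 := by
    rw [← Real.exp_add]; simp
  nlinarith [mul_le_mul_of_nonneg_left h he.le]

-- F(t) = t/2*(e^t+1) - e^t + 1 ≥ 0 for t ≥ 0
lemma aux_F_nonneg {t : ℝ} (ht : 0 ≤ t) :
    0 ≤ t / 2 * (Real.exp t + 1) - Real.exp t + 1 := by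
  set F : ℝ → ℝ := fun s => s / 2 * (Real.exp s + 1) - Real.exp s + 1 with hF
  have hderiv : ∀ s : ℝ, HasDerivAt F ((s * Real.exp s - Real.exp s + 1) / 2) s := by
    intro s
    have h1 : HasDerivAt (fun s : ℝ => s / 2 * (Real.exp s + 1))
        (1 / 2 * (Real.exp s + 1) + s / 2 * Real.exp s) s := by
      have := ((hasDerivAt_id s).div_const 2).mul ((Real.hasDerivAt_exp s).add_const 1)
      exact this
    have h2 := (h1.sub (Real.hasDerivAt_exp s)).add_const 1
    refine h2.congr_deriv ?_
    ring
  have hmono : MonotoneOn F (Ici (0:ℝ)) := by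
    apply monotoneOn_of_deriv_nonneg (convex_Ici 0)
    · exact Continuous.continuousOn (by continuity)
    · intro s hs
      exact (hderiv s).differentiableAt.differentiableWithinAt
    · intro s hs
      rw [(hderiv s).deriv]
      have := aux_k_nonneg s
      linarith
  have h0 : F 0 = 0 := by simp [hF]
  have := hmono self_mem_Ici (mem_Ici.mpr ht) ht
  rw [h0] at this
  simpa [hF] using this

-- main pointwise inequality: k(t) ≥ t e^t / 2 - |t|/2 for all t
lemma aux_main (t : ℝ) :
    t * Real.exp t / 2 - |t| / 2 ≤ t * Real.exp t - (Real.exp t - 1) := by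
  rcases le_or_gt t 0 with h | h
  · have h1 : t * Real.exp t ≤ 0 := mul_nonpos_of_nonpos_of_nonneg h (Real.exp_pos t).le
    have h2 := aux_k_nonneg t
    have h3 : (0:ℝ) ≤ |t| := abs_nonneg t
    linarith
  · rw [abs_of_pos h]
    have := aux_F_nonneg h.le
    nlinarith

-- t(e^t - 1) ≥ 0
lemma aux_sign (t : ℝ) : 0 ≤ t * (Real.exp t - 1) := by
  rcases le_or_gt t 0 with h | h
  · have : Real.exp t ≤ 1 := Real.exp_le_one_iff.mpr h
    nlinarith [mul_nonneg (neg_nonneg.2 h) (by linarith : (0:ℝ) ≤ 1 - Real.exp t)]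
  · have : 1 ≤ Real.exp t := Real.one_le_exp h.le
    exact mul_nonneg h.le (by linarith)

-- |e^t - 1| ≤ |t| * max(e^t, 1) ≤ |t| * C when e^t ≤ C, 1 ≤ C
lemma aux_abs_exp_sub_one {t C : ℝ} (h1 : Real.exp t ≤ C) (h2 : (1:ℝ) ≤ C) :
    |Real.exp t - 1| ≤ |t| * C := by
  rcases le_or_gt 0 t with h | h
  · rw [abs_of_nonneg (by linarith [Real.one_le_exp h] : (0:ℝ) ≤ Real.exp t - 1),
      abs_of_nonneg h]
    have := aux_k_nonneg t
    nlinarith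
  · rw [abs_of_nonpos (by linarith [Real.exp_le_one_iff.mpr h.le] : Real.exp t - 1 ≤ 0),
      abs_of_neg h]
    have := Real.add_one_le_exp t
    nlinarith

/-- Lemma A.1(b) of the paper: if `ν` is a Lévy measure supported in `[−ε, ε]` with
`∫ |x| dν ≤ |c|/2`, `c ≠ 0`, and `u` solves `c + ∫ e^{ux} x dν = 0`, then with
`Λ(u) = cu + ∫ (e^{ux} − 1) dν` one has `|cu| ≤ −4Λ(u)`. -/
theorem stmt_11 (ε : ℝ) (hε : 0 < ε) (c : ℝ) (hc : c ≠ 0)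
    (ν : Measure ℝ) (hν0 : ν {0} = 0) (hsupp : ν (Icc (-ε) ε)ᶜ = 0)
    (hint : Integrable (fun x : ℝ => |x|) ν)
    (hsmall : ∫ x, |x| ∂ν ≤ |c| / 2)
    (u : ℝ) (hu : c + ∫ x, Real.exp (u * x) * x ∂ν = 0) :
    |c * u| ≤ -(4 * (c * u + ∫ x, (Real.exp (u * x) - 1) ∂ν)) := by
  have hae : ∀ᵐ x ∂ν, x ∈ Icc (-ε) ε := by
    rw [MeasureTheory.ae_iff]
    exact hsupp
  have habs : ∀ᵐ x ∂ν, |x| ≤ ε := by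
    filter_upwards [hae] with x hx
    exact abs_le.mpr ⟨hx.1, hx.2⟩
  set C := Real.exp (|u| * ε) with hC
  have hC1 : (1:ℝ) ≤ C := Real.one_le_exp (mul_nonneg (abs_nonneg u) hε.le)
  have huxb : ∀ᵐ x ∂ν, |u * x| ≤ |u| * ε := by
    filter_upwards [habs] with x hx
    rw [abs_mul]
    exact mul_le_mul_of_nonneg_left hx (abs_nonneg u)
  have hexp_bound : ∀ᵐ x ∂ν, Real.exp (u * x) ≤ C := by
    filter_upwards [huxb] with x hx
    exact Real.exp_le_exp.mpr (le_trans (le_abs_self _) hx)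
  -- integrability
  have hintx : Integrable (fun x : ℝ => x) ν := by
    refine hint.mono' continuous_id.aestronglyMeasurable ?_
    filter_upwards with x
    simp
  have h1 : Integrable (fun x : ℝ => Real.exp (u * x) * x) ν := by
    refine (hint.const_mul C).mono'
      ((Continuous.mul (by continuity) continuous_id).aestronglyMeasurable) ?_
    filter_upwards [hexp_bound] with x hx
    rw [norm_mul, Real.norm_eq_abs, Real.norm_eq_abs, Real.abs_exp]
    exact mul_le_mul_of_nonneg_right hx (abs_nonneg x)
  have h2 : Integrable (fun x : ℝ => Real.exp (u * x) - 1) ν := by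
    refine (hint.const_mul (|u| * C)).mono'
      ((Continuous.sub (by continuity) continuous_const).aestronglyMeasurable) ?_
    filter_upwards [hexp_bound] with x hx
    rw [Real.norm_eq_abs]
    calc |Real.exp (u * x) - 1| ≤ |u * x| * C := aux_abs_exp_sub_one hx hC1
    _ = |u| * C * |x| := by rw [abs_mul]; ring
  -- notation
  set I1 := ∫ x, Real.exp (u * x) * x ∂ν with hI1
  set I2 := ∫ x, (Real.exp (u * x) - 1) ∂ν with hI2
  set J := ∫ x, x ∂ν with hJ
  set A := ∫ x, |x| ∂ν with hA
  have hI1c : I1 = -c := by linarith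
  have hJA : |J| ≤ A := by
    calc |J| = |∫ x, x ∂ν| := rfl
    _ ≤ ∫ x, |x| ∂ν := by
        simpa [Real.norm_eq_abs] using norm_integral_le_integral_norm (μ := ν) (f := fun x : ℝ => x)
  have hA0 : 0 ≤ A := integral_nonneg fun x => abs_nonneg x
  -- sign: c * u ≤ 0
  have hsign : c * u ≤ 0 := by
    have hnn : 0 ≤ ∫ x, (u * (Real.exp (u * x) * x) - u * x) ∂ν := by
      apply integral_nonneg
      intro x
      have := aux_sign (u * x)
      simp only [Pi.zero_apply]
      nlinarith
    rw [integral_sub (h1.const_mul u) (hintx.const_mul u), integral_const_mul,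
      integral_const_mul] at hnn
    rw [← hI1, ← hJ] at hnn
    have huJ : -(|u| * A) ≤ u * J := by
      have : |u * J| ≤ |u| * A := by
        rw [abs_mul]
        exact mul_le_mul_of_nonneg_left hJA (abs_nonneg u)
      linarith [neg_abs_le (u * J)]
    have huI1 : u * I1 = -(c * u) := by rw [hI1c]; ring
    have hcu : -(c * u) ≥ -(|u| * (|c| / 2)) := by
      have : |u| * A ≤ |u| * (|c| / 2) := mul_le_mul_of_nonneg_left hsmall (abs_nonneg u)
      linarith
    by_contra hpos
    push_neg at hpos
    have habs_cu : |c * u| = c * u := abs_of_pos hpos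
    rw [abs_mul] at habs_cu
    nlinarith [abs_nonneg c, abs_nonneg u]
  -- main bound: S = u*I1 - I2 ≥ u*I1/2 - |u|*A/2
  have hmain : u * I1 / 2 - |u| * A / 2 ≤ u * I1 - I2 := by
    have hle : ∫ x, (u * (Real.exp (u * x) * x) / 2 - |u| * |x| / 2) ∂ν
        ≤ ∫ x, (u * (Real.exp (u * x) * x) - (Real.exp (u * x) - 1)) ∂ν := by
      apply integral_mono
      · exact ((h1.const_mul u).div_const 2).sub ((hint.const_mul |u|).div_const 2)
      · exact (h1.const_mul u).sub h2
      · intro x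
        have := aux_main (u * x)
        have habsmul : |u * x| = |u| * |x| := abs_mul u x
        simp only
        nlinarith
    rw [integral_sub (h1.const_mul u) h2] at hle
    rw [integral_sub ((h1.const_mul u).div_const 2) ((hint.const_mul |u|).div_const 2),
      integral_div, integral_div, integral_const_mul, integral_const_mul] at hle
    rw [← hI1, ← hI2, ← hA] at hle
    linarith
  have hAu : |u| * A ≤ |c * u| / 2 := by
    have : |u| * A ≤ |u| * (|c| / 2) := mul_le_mul_of_nonneg_left hsmall (abs_nonneg u)
    rw [abs_mul]
    nlinarith [abs_nonneg u]
  have hcu_abs : |c * u| = -(c * u) := abs_of_nonpos hsign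
  rw [hI1c] at hmain
  nlinarith
end

section
/- There exist absolute constants 0 < c ≤ C such that the following holds. Let ν_A be a nonnegative Borel measure on (0, ∞) with ∫ min(1, x) dν_A(x) < ∞, let μ_G denote the standard Gaussian measure on ℝ (mean 0, variance 1), and for ε > 0 define Φ(ε⁻²) := ∫ (1 − e^{−x ε⁻²}) dν_A(x), F(ε) := ε⁻² ∫ (∫_ℝ x t² 𝟙{x t² ≤ ε²} dμ_G(t)) dν_A(x), and N(ε) := ∫ μ_G({t ∈ ℝ : x t² > ε²}) dν_A(x). Then for every such ν_A and every ε > 0: c Φ(ε⁻²) ≤ F(ε) + N(ε) ≤ C Φ(ε⁻²). -/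
open MeasureTheory Real Set ProbabilityTheory
open scoped NNReal ENNReal


noncomputable def gM2 : ℝ≥0∞ := ∫⁻ t, ENNReal.ofReal (t ^ 2) ∂(gaussianReal 0 1)
noncomputable def gP : ℝ≥0∞ := gaussianReal 0 1 {t : ℝ | 1 < t ^ 2}
noncomputable def gm : ℝ≥0∞ :=
  ∫⁻ t, Set.indicator {t : ℝ | t ^ 2 ≤ 1} (fun t => ENNReal.ofReal (t ^ 2)) t ∂(gaussianReal 0 1)

lemma aux_gauss_pos {s : Set ℝ} (h : (volume : Measure ℝ) s ≠ 0) :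
    0 < gaussianReal 0 1 s := by
  rw [gaussianReal_of_var_ne_zero 0 one_ne_zero, pos_iff_ne_zero]
  intro h0
  rw [withDensity_apply_eq_zero (measurable_gaussianPDF 0 1)] at h0
  have he : {x : ℝ | gaussianPDF 0 1 x ≠ 0} = Set.univ :=
    Set.eq_univ_of_forall fun x => (gaussianPDF_pos 0 one_ne_zero x).ne'
  rw [he, Set.univ_inter] at h0
  exact h h0

lemma gP_pos : 0 < gP := by
  refine lt_of_lt_of_le ?_ (measure_mono (fun t (ht : t ∈ Ioi (1:ℝ)) => ?_))
  · exact aux_gauss_pos (by simp [Real.volume_Ioi])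
  · have : (1:ℝ) < t := ht
    show (1:ℝ) < t ^ 2
    nlinarith

lemma gm_pos : 0 < gm := by
  have hmono : ∀ t : ℝ, Set.indicator (Set.Ioc (1/2 : ℝ) 1) (fun _ => ENNReal.ofReal (1/4)) t
      ≤ Set.indicator {t : ℝ | t ^ 2 ≤ 1} (fun t => ENNReal.ofReal (t ^ 2)) t := by
    intro t
    by_cases ht : t ∈ Set.Ioc (1/2 : ℝ) 1
    · rw [Set.indicator_of_mem ht]
      obtain ⟨h1, h2⟩ := ht
      have hm : t ∈ {t : ℝ | t ^ 2 ≤ 1} := by show t ^ 2 ≤ 1; nlinarith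
      rw [Set.indicator_of_mem hm]
      exact ENNReal.ofReal_le_ofReal (by nlinarith)
    · rw [Set.indicator_of_notMem ht]; exact zero_le
  have h1 : ENNReal.ofReal (1/4) * gaussianReal 0 1 (Set.Ioc (1/2 : ℝ) 1) ≤ gm := by
    rw [← lintegral_indicator_const measurableSet_Ioc]
    exact lintegral_mono hmono
  have h2 : 0 < gaussianReal 0 1 (Set.Ioc (1/2 : ℝ) 1) :=
    aux_gauss_pos (by rw [Real.volume_Ioc]; simp; norm_num)
  refine lt_of_lt_of_le ?_ h1
  exact ENNReal.mul_pos (ENNReal.ofReal_pos.mpr (by norm_num)).ne' h2.ne'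

lemma aux_one_sub_exp_le (y : ℝ) : 1 - Real.exp (-y) ≤ y := by
  have := Real.add_one_le_exp (-y); linarith

lemma key_ge (ε x : ℝ) (hε : 0 < ε) (hx : 0 < x) :
    min gP gm * ENNReal.ofReal (1 - Real.exp (-(x / ε ^ 2)))
      ≤ ENNReal.ofReal ((ε ^ 2)⁻¹) *
          (∫⁻ t, Set.indicator {t : ℝ | x * t ^ 2 ≤ ε ^ 2}
            (fun t => ENNReal.ofReal (x * t ^ 2)) t ∂(gaussianReal 0 1))
        + gaussianReal 0 1 {t : ℝ | ε ^ 2 < x * t ^ 2} := by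
  have hε2 : (0:ℝ) < ε ^ 2 := by positivity
  set L := ENNReal.ofReal (1 - Real.exp (-(x / ε ^ 2))) with hL
  rcases le_or_gt (ε ^ 2) x with h | h
  · -- big x : use the tail
    have hsub : {t : ℝ | 1 < t ^ 2} ⊆ {t : ℝ | ε ^ 2 < x * t ^ 2} := by
      intro t ht
      have h1 : (1:ℝ) < t ^ 2 := ht
      show ε ^ 2 < x * t ^ 2
      nlinarith
    have h1 : gP ≤ gaussianReal 0 1 {t : ℝ | ε ^ 2 < x * t ^ 2} := measure_mono hsub
    have hL1 : L ≤ 1 := by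
      rw [hL, ← ENNReal.ofReal_one]
      exact ENNReal.ofReal_le_ofReal (by have := (Real.exp_pos (-(x / ε ^ 2))).le; linarith)
    calc min gP gm * L ≤ gP * 1 := mul_le_mul' (min_le_left _ _) hL1
      _ = gP := mul_one _
      _ ≤ gaussianReal 0 1 {t : ℝ | ε ^ 2 < x * t ^ 2} := h1
      _ ≤ _ := le_add_self
  · -- small x : use the oscillation term
    have hsub : {t : ℝ | t ^ 2 ≤ 1} ⊆ {t : ℝ | x * t ^ 2 ≤ ε ^ 2} := by
      intro t ht
      have h1 : t ^ 2 ≤ 1 := ht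
      show x * t ^ 2 ≤ ε ^ 2
      nlinarith
    have hmono : ∀ t : ℝ, Set.indicator {t : ℝ | t ^ 2 ≤ 1} (fun t => ENNReal.ofReal (x * t ^ 2)) t
        ≤ Set.indicator {t : ℝ | x * t ^ 2 ≤ ε ^ 2} (fun t => ENNReal.ofReal (x * t ^ 2)) t :=
      fun t => Set.indicator_le_indicator_of_subset hsub (fun _ => zero_le) t
    have heq : ∀ t : ℝ, Set.indicator {t : ℝ | t ^ 2 ≤ 1} (fun t => ENNReal.ofReal (x * t ^ 2)) t
        = ENNReal.ofReal x * Set.indicator {t : ℝ | t ^ 2 ≤ 1} (fun t => ENNReal.ofReal (t ^ 2)) t := by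
      intro t
      by_cases ht : t ∈ {t : ℝ | t ^ 2 ≤ 1}
      · rw [Set.indicator_of_mem ht, Set.indicator_of_mem ht, ENNReal.ofReal_mul hx.le]
      · rw [Set.indicator_of_notMem ht, Set.indicator_of_notMem ht, mul_zero]
    have hmeas : Measurable fun t : ℝ => Set.indicator {t : ℝ | t ^ 2 ≤ 1}
        (fun t => ENNReal.ofReal (t ^ 2)) t :=
      ((measurable_id.pow_const 2).ennreal_ofReal).indicator
        (measurableSet_le (measurable_id.pow_const 2) measurable_const)
    have h2 : ENNReal.ofReal x * gm
        ≤ ∫⁻ t, Set.indicator {t : ℝ | x * t ^ 2 ≤ ε ^ 2}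
            (fun t => ENNReal.ofReal (x * t ^ 2)) t ∂(gaussianReal 0 1) := by
      rw [gm, ← lintegral_const_mul _ hmeas]
      refine lintegral_mono fun t => ?_
      exact le_of_eq_of_le (heq t).symm (hmono t)
    have h3 : L ≤ ENNReal.ofReal (x / ε ^ 2) :=
      ENNReal.ofReal_le_ofReal (aux_one_sub_exp_le _)
    calc min gP gm * L ≤ gm * ENNReal.ofReal (x / ε ^ 2) :=
          mul_le_mul' (min_le_right _ _) h3
      _ = ENNReal.ofReal ((ε ^ 2)⁻¹) * (ENNReal.ofReal x * gm) := by
          rw [← mul_assoc, ← ENNReal.ofReal_mul (by positivity),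
            show (ε ^ 2)⁻¹ * x = x / ε ^ 2 by ring, mul_comm]
      _ ≤ ENNReal.ofReal ((ε ^ 2)⁻¹) *
            (∫⁻ t, Set.indicator {t : ℝ | x * t ^ 2 ≤ ε ^ 2}
              (fun t => ENNReal.ofReal (x * t ^ 2)) t ∂(gaussianReal 0 1)) :=
          mul_le_mul_right h2 _
      _ ≤ _ := le_self_add

lemma aux_exp_pos_consts : 0 < 1 - Real.exp (-1) := by
  have : Real.exp (-1 : ℝ) < Real.exp 0 := Real.exp_lt_exp.mpr (by norm_num)
  simp only [Real.exp_zero] at this; linarith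

lemma aux_min_le (y : ℝ) (hy : 0 ≤ y) :
    min y 1 ≤ (1 - Real.exp (-1))⁻¹ * (1 - Real.exp (-y)) := by
  have he := aux_exp_pos_consts
  rw [inv_mul_eq_div, le_div_iff₀ he]
  rcases le_total y 1 with h | h
  · rw [min_eq_left h]
    have hc := convexOn_exp.2 (Set.mem_univ (0 : ℝ)) (Set.mem_univ (-1 : ℝ))
      (by linarith : (0:ℝ) ≤ 1 - y) hy (by ring)
    simp only [smul_eq_mul, mul_zero, zero_add, Real.exp_zero, mul_one] at hc
    have h3 : y * (-1 : ℝ) = -y := by ring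
    rw [h3] at hc
    nlinarith
  · rw [min_eq_right h]
    have : Real.exp (-y) ≤ Real.exp (-1) := Real.exp_le_exp.mpr (by linarith)
    nlinarith

lemma key_le (ε x : ℝ) (hε : 0 < ε) (hx : 0 < x) :
    ENNReal.ofReal ((ε ^ 2)⁻¹) *
          (∫⁻ t, Set.indicator {t : ℝ | x * t ^ 2 ≤ ε ^ 2}
            (fun t => ENNReal.ofReal (x * t ^ 2)) t ∂(gaussianReal 0 1))
        + gaussianReal 0 1 {t : ℝ | ε ^ 2 < x * t ^ 2}
      ≤ (2 * max gM2 1 * ENNReal.ofReal ((1 - Real.exp (-1))⁻¹)) *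
          ENNReal.ofReal (1 - Real.exp (-(x / ε ^ 2))) := by
  have hε2 : (0:ℝ) < ε ^ 2 := by positivity
  set M : ℝ≥0∞ := max gM2 1 with hM
  set u : ℝ≥0∞ := ENNReal.ofReal (min (x / ε ^ 2) 1) with hu
  set inner : ℝ≥0∞ := ∫⁻ t, Set.indicator {t : ℝ | x * t ^ 2 ≤ ε ^ 2}
      (fun t => ENNReal.ofReal (x * t ^ 2)) t ∂(gaussianReal 0 1) with hinner
  set tail : ℝ≥0∞ := gaussianReal 0 1 {t : ℝ | ε ^ 2 < x * t ^ 2} with htail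
  have hmeas_sq : Measurable fun t : ℝ => ENNReal.ofReal (t ^ 2) :=
    (measurable_id.pow_const 2).ennreal_ofReal
  -- second moment bound on inner integral
  have hfull : (∫⁻ t, ENNReal.ofReal (x * t ^ 2) ∂(gaussianReal 0 1))
      = ENNReal.ofReal x * gM2 := by
    rw [gM2, ← lintegral_const_mul _ hmeas_sq]
    exact lintegral_congr fun t => ENNReal.ofReal_mul hx.le
  have hinner_le_full : inner ≤ ENNReal.ofReal x * gM2 := by
    rw [hinner, ← hfull]
    exact lintegral_mono fun t => Set.indicator_le_self _ _ t
  have hof : ENNReal.ofReal ((ε ^ 2)⁻¹) * ENNReal.ofReal x = ENNReal.ofReal (x / ε ^ 2) := by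
    rw [← ENNReal.ofReal_mul (by positivity), show (ε ^ 2)⁻¹ * x = x / ε ^ 2 by ring]
  have f1 : ENNReal.ofReal ((ε ^ 2)⁻¹) * inner ≤ ENNReal.ofReal (x / ε ^ 2) * gM2 := by
    calc ENNReal.ofReal ((ε ^ 2)⁻¹) * inner
        ≤ ENNReal.ofReal ((ε ^ 2)⁻¹) * (ENNReal.ofReal x * gM2) := mul_le_mul_right hinner_le_full _
      _ = ENNReal.ofReal (x / ε ^ 2) * gM2 := by rw [← mul_assoc, hof]
  have f2 : ENNReal.ofReal ((ε ^ 2)⁻¹) * inner ≤ 1 := by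
    have hb : inner ≤ ENNReal.ofReal (ε ^ 2) := by
      rw [hinner]
      calc ∫⁻ t, Set.indicator {t : ℝ | x * t ^ 2 ≤ ε ^ 2}
            (fun t => ENNReal.ofReal (x * t ^ 2)) t ∂(gaussianReal 0 1)
          ≤ ∫⁻ _, ENNReal.ofReal (ε ^ 2) ∂(gaussianReal 0 1) := by
            refine lintegral_mono fun t => ?_
            by_cases ht : t ∈ {t : ℝ | x * t ^ 2 ≤ ε ^ 2}
            · rw [Set.indicator_of_mem ht]; exact ENNReal.ofReal_le_ofReal ht
            · rw [Set.indicator_of_notMem ht]; exact zero_le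
        _ = ENNReal.ofReal (ε ^ 2) := by rw [lintegral_const, measure_univ, mul_one]
    calc ENNReal.ofReal ((ε ^ 2)⁻¹) * inner
        ≤ ENNReal.ofReal ((ε ^ 2)⁻¹) * ENNReal.ofReal (ε ^ 2) := mul_le_mul_right hb _
      _ = 1 := by
          rw [← ENNReal.ofReal_mul (by positivity), inv_mul_cancel₀ hε2.ne', ENNReal.ofReal_one]
  have f3 : tail ≤ ENNReal.ofReal (x / ε ^ 2) * gM2 := by
    have hmk := mul_meas_ge_le_lintegral₀
      (μ := gaussianReal 0 1)
      (f := fun t : ℝ => ENNReal.ofReal (x * t ^ 2))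
      ((measurable_const.mul (measurable_id.pow_const 2)).ennreal_ofReal).aemeasurable
      (ENNReal.ofReal (ε ^ 2))
    have hsub : tail ≤ gaussianReal 0 1 {t : ℝ | ENNReal.ofReal (ε ^ 2) ≤ ENNReal.ofReal (x * t ^ 2)} := by
      refine measure_mono fun t ht => ?_
      exact ENNReal.ofReal_le_ofReal (le_of_lt ht)
    have h4 : ENNReal.ofReal (ε ^ 2) * tail ≤ ENNReal.ofReal x * gM2 := by
      calc ENNReal.ofReal (ε ^ 2) * tail
          ≤ ENNReal.ofReal (ε ^ 2) *
            gaussianReal 0 1 {t : ℝ | ENNReal.ofReal (ε ^ 2) ≤ ENNReal.ofReal (x * t ^ 2)} :=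
            mul_le_mul_right hsub _
        _ ≤ ∫⁻ t, ENNReal.ofReal (x * t ^ 2) ∂(gaussianReal 0 1) := hmk
        _ = ENNReal.ofReal x * gM2 := hfull
    have h5 : tail ≤ ENNReal.ofReal x * gM2 / ENNReal.ofReal (ε ^ 2) := by
      rw [ENNReal.le_div_iff_mul_le (Or.inl (by simp [hε2, hε.ne'])) (Or.inl ENNReal.ofReal_ne_top)]
      rw [mul_comm]; exact h4
    calc tail ≤ ENNReal.ofReal x * gM2 / ENNReal.ofReal (ε ^ 2) := h5
      _ = ENNReal.ofReal (x / ε ^ 2) * gM2 := by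
          rw [div_eq_mul_inv, ← ENNReal.ofReal_inv_of_pos hε2, mul_comm (ENNReal.ofReal x) gM2,
            mul_assoc, ← ENNReal.ofReal_mul (by positivity),
            show x * (ε ^ 2)⁻¹ = x / ε ^ 2 by ring, mul_comm]
  have f4 : tail ≤ 1 := prob_le_one
  -- combine: each term ≤ M * u
  have hterm1 : ENNReal.ofReal ((ε ^ 2)⁻¹) * inner ≤ M * u := by
    rcases le_total (x / ε ^ 2) 1 with h | h
    · rw [hu, min_eq_left h]
      calc ENNReal.ofReal ((ε ^ 2)⁻¹) * inner ≤ ENNReal.ofReal (x / ε ^ 2) * gM2 := f1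
        _ ≤ ENNReal.ofReal (x / ε ^ 2) * M := mul_le_mul_right (le_max_left _ _) _
        _ = M * ENNReal.ofReal (x / ε ^ 2) := mul_comm _ _
    · rw [hu, min_eq_right h]
      calc ENNReal.ofReal ((ε ^ 2)⁻¹) * inner ≤ 1 := f2
        _ ≤ M * ENNReal.ofReal 1 := by
            rw [ENNReal.ofReal_one, mul_one]; exact le_max_right _ _
  have hterm2 : tail ≤ M * u := by
    rcases le_total (x / ε ^ 2) 1 with h | h
    · rw [hu, min_eq_left h]
      calc tail ≤ ENNReal.ofReal (x / ε ^ 2) * gM2 := f3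
        _ ≤ ENNReal.ofReal (x / ε ^ 2) * M := mul_le_mul_right (le_max_left _ _) _
        _ = M * ENNReal.ofReal (x / ε ^ 2) := mul_comm _ _
    · rw [hu, min_eq_right h]
      calc tail ≤ 1 := f4
        _ ≤ M * ENNReal.ofReal 1 := by
            rw [ENNReal.ofReal_one, mul_one]; exact le_max_right _ _
  have hu_le : u ≤ ENNReal.ofReal ((1 - Real.exp (-1))⁻¹) *
      ENNReal.ofReal (1 - Real.exp (-(x / ε ^ 2))) := by
    rw [hu, ← ENNReal.ofReal_mul (inv_nonneg.mpr aux_exp_pos_consts.le)]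
    exact ENNReal.ofReal_le_ofReal (aux_min_le _ (by positivity))
  calc ENNReal.ofReal ((ε ^ 2)⁻¹) * inner + tail
      ≤ M * u + M * u := add_le_add hterm1 hterm2
    _ = 2 * M * u := by ring
    _ ≤ 2 * M * (ENNReal.ofReal ((1 - Real.exp (-1))⁻¹) *
        ENNReal.ofReal (1 - Real.exp (-(x / ε ^ 2)))) := mul_le_mul_right hu_le _
    _ = (2 * M * ENNReal.ofReal ((1 - Real.exp (-1))⁻¹)) *
        ENNReal.ofReal (1 - Real.exp (-(x / ε ^ 2))) := by ring

lemma aux_M2_lt_top : gM2 < ⊤ := by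
  have h1 : Integrable (fun x : ℝ => x ^ (2:ℝ) * Real.exp (-(1/2) * x ^ 2)) :=
    integrable_rpow_mul_exp_neg_mul_sq (by norm_num) (by norm_num)
  have hint : Integrable (fun t : ℝ => gaussianPDFReal 0 1 t * t ^ 2) := by
    refine (h1.const_mul ((√(2 * π))⁻¹)).congr (Filter.Eventually.of_forall fun t => ?_)
    show (√(2 * π))⁻¹ * (t ^ (2:ℝ) * Real.exp (-(1/2) * t ^ 2)) = gaussianPDFReal 0 1 t * t ^ 2
    rw [Real.rpow_two]
    simp only [gaussianPDFReal]
    rw [show -(t - 0) ^ 2 / (2 * ((1:ℝ≥0):ℝ)) = -(1/2) * t ^ 2 by push_cast; ring]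
    push_cast
    ring
  have hmeas : Measurable fun t : ℝ => ENNReal.ofReal (t ^ 2) :=
    (measurable_id.pow_const 2).ennreal_ofReal
  rw [gM2, gaussianReal_of_var_ne_zero 0 one_ne_zero,
    lintegral_withDensity_eq_lintegral_mul _ (measurable_gaussianPDF 0 1) hmeas]
  have heq : ∀ t : ℝ, (gaussianPDF 0 1 * fun t => ENNReal.ofReal (t ^ 2)) t
      = ENNReal.ofReal (gaussianPDFReal 0 1 t * t ^ 2) := by
    intro t
    simp only [Pi.mul_apply, gaussianPDF]
    rw [← ENNReal.ofReal_mul (gaussianPDFReal_nonneg 0 1 t)]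
  rw [lintegral_congr heq]
  have := hint.hasFiniteIntegral
  rwa [hasFiniteIntegral_iff_ofReal (Filter.Eventually.of_forall fun t =>
    mul_nonneg (gaussianPDFReal_nonneg 0 1 t) (sq_nonneg t))] at this


/-- The analytic core of Example 2.13 of the paper: for a driftless subordinator with Lévy
measure `ν_A` and Laplace exponent `Φ`, the oscillation term `F(ε)` plus the big-jump term
`N(ε)` of Brownian motion subordinated by it is weakly equivalent to `Φ(ε⁻²)`, with
absolute constants. -/
theorem stmt_13 :
    ∃ c C : ℝ≥0∞, 0 < c ∧ c ≤ C ∧ C < ⊤ ∧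
      ∀ (νA : Measure ℝ), νA (Ioi (0 : ℝ))ᶜ = 0 →
        (∫⁻ x, ENNReal.ofReal (min 1 x) ∂νA) < ⊤ →
        ∀ ε : ℝ, 0 < ε →
          c * ∫⁻ x, ENNReal.ofReal (1 - Real.exp (-(x / ε ^ 2))) ∂νA
            ≤ (ENNReal.ofReal ((ε ^ 2)⁻¹) *
                ∫⁻ x, (∫⁻ t, Set.indicator {t : ℝ | x * t ^ 2 ≤ ε ^ 2}
                  (fun t => ENNReal.ofReal (x * t ^ 2)) t ∂(gaussianReal 0 1)) ∂νA)
              + ∫⁻ x, gaussianReal 0 1 {t : ℝ | ε ^ 2 < x * t ^ 2} ∂νA ∧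
          (ENNReal.ofReal ((ε ^ 2)⁻¹) *
              ∫⁻ x, (∫⁻ t, Set.indicator {t : ℝ | x * t ^ 2 ≤ ε ^ 2}
                (fun t => ENNReal.ofReal (x * t ^ 2)) t ∂(gaussianReal 0 1)) ∂νA)
            + ∫⁻ x, gaussianReal 0 1 {t : ℝ | ε ^ 2 < x * t ^ 2} ∂νA
            ≤ C * ∫⁻ x, ENNReal.ofReal (1 - Real.exp (-(x / ε ^ 2))) ∂νA := by
  refine ⟨min gP gm, 2 * max gM2 1 * ENNReal.ofReal ((1 - Real.exp (-1))⁻¹),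
    lt_min gP_pos gm_pos, ?_, ?_, ?_⟩
  · -- c ≤ C
    have h1 : min gP gm ≤ 1 := (min_le_left _ _).trans prob_le_one
    have h2 : (1:ℝ≥0∞) ≤ 2 * max gM2 1 * ENNReal.ofReal ((1 - Real.exp (-1))⁻¹) := by
      have ha : (1:ℝ≥0∞) ≤ 2 * max gM2 1 := by
        calc (1:ℝ≥0∞) ≤ 2 * 1 := by norm_num
          _ ≤ 2 * max gM2 1 := mul_le_mul_right (le_max_right _ _) _
      have hb : (1:ℝ≥0∞) ≤ ENNReal.ofReal ((1 - Real.exp (-1))⁻¹) := by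
        rw [ENNReal.one_le_ofReal]
        rw [le_inv_comm₀ one_pos aux_exp_pos_consts]
        have := (Real.exp_pos (-1:ℝ)).le
        linarith
      calc (1:ℝ≥0∞) = 1 * 1 := (one_mul 1).symm
        _ ≤ 2 * max gM2 1 * ENNReal.ofReal ((1 - Real.exp (-1))⁻¹) := mul_le_mul' ha hb
    exact h1.trans h2
  · -- C < ⊤
    refine ENNReal.mul_lt_top (ENNReal.mul_lt_top ?_ ?_) ENNReal.ofReal_lt_top
    · exact lt_of_le_of_lt le_rfl (by norm_num)
    · exact max_lt aux_M2_lt_top ENNReal.one_lt_top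
  · intro νA hν _hint ε hε
    have hae : ∀ᵐ x ∂νA, 0 < x := by
      rw [ae_iff]
      have heq : {a : ℝ | ¬ 0 < a} = (Ioi (0:ℝ))ᶜ := by
        ext a; simp [Set.mem_Ioi]
      rw [heq]; exact hν
    have hG : Measurable fun x : ℝ => ENNReal.ofReal (1 - Real.exp (-(x / ε ^ 2))) := by
      exact (measurable_const.sub ((measurable_id.div_const _).neg.exp)).ennreal_ofReal
    have hmeasP : Measurable fun p : ℝ × ℝ => p.1 * p.2 ^ 2 :=
      measurable_fst.mul (measurable_snd.pow_const 2)
    have hInner : Measurable fun x : ℝ => ∫⁻ t, Set.indicator {t : ℝ | x * t ^ 2 ≤ ε ^ 2}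
        (fun t => ENNReal.ofReal (x * t ^ 2)) t ∂(gaussianReal 0 1) := by
      have hF : Measurable (Set.indicator {p : ℝ × ℝ | p.1 * p.2 ^ 2 ≤ ε ^ 2}
          (fun p => ENNReal.ofReal (p.1 * p.2 ^ 2))) :=
        (hmeasP.ennreal_ofReal).indicator (measurableSet_le hmeasP measurable_const)
      have hrw : ∀ x : ℝ, (∫⁻ t, Set.indicator {t : ℝ | x * t ^ 2 ≤ ε ^ 2}
            (fun t => ENNReal.ofReal (x * t ^ 2)) t ∂(gaussianReal 0 1))
          = ∫⁻ t, Set.indicator {p : ℝ × ℝ | p.1 * p.2 ^ 2 ≤ ε ^ 2}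
            (fun p => ENNReal.ofReal (p.1 * p.2 ^ 2)) (x, t) ∂(gaussianReal 0 1) := by
        intro x
        exact lintegral_congr fun t => rfl
      simp only [hrw]
      exact hF.lintegral_prod_right'
    have hTail : Measurable fun x : ℝ => gaussianReal 0 1 {t : ℝ | ε ^ 2 < x * t ^ 2} := by
      have hs : MeasurableSet {p : ℝ × ℝ | ε ^ 2 < p.1 * p.2 ^ 2} :=
        measurableSet_lt measurable_const hmeasP
      exact measurable_measure_prodMk_left (ν := gaussianReal 0 1) hs
    set inner : ℝ → ℝ≥0∞ := fun x => ∫⁻ t, Set.indicator {t : ℝ | x * t ^ 2 ≤ ε ^ 2}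
        (fun t => ENNReal.ofReal (x * t ^ 2)) t ∂(gaussianReal 0 1) with hinner_def
    set tail : ℝ → ℝ≥0∞ := fun x => gaussianReal 0 1 {t : ℝ | ε ^ 2 < x * t ^ 2} with htail_def
    have hsum : (ENNReal.ofReal ((ε ^ 2)⁻¹) * ∫⁻ x, inner x ∂νA) + ∫⁻ x, tail x ∂νA
        = ∫⁻ x, (ENNReal.ofReal ((ε ^ 2)⁻¹) * inner x + tail x) ∂νA := by
      rw [lintegral_add_left (hInner.const_mul _), lintegral_const_mul _ hInner]
    constructor
    · calc min gP gm * ∫⁻ x, ENNReal.ofReal (1 - Real.exp (-(x / ε ^ 2))) ∂νA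
          = ∫⁻ x, min gP gm * ENNReal.ofReal (1 - Real.exp (-(x / ε ^ 2))) ∂νA :=
            (lintegral_const_mul _ hG).symm
        _ ≤ ∫⁻ x, (ENNReal.ofReal ((ε ^ 2)⁻¹) * inner x + tail x) ∂νA :=
            lintegral_mono_ae (hae.mono fun x hx => key_ge ε x hε hx)
        _ = _ := hsum.symm
    · calc (ENNReal.ofReal ((ε ^ 2)⁻¹) * ∫⁻ x, inner x ∂νA) + ∫⁻ x, tail x ∂νA
          = ∫⁻ x, (ENNReal.ofReal ((ε ^ 2)⁻¹) * inner x + tail x) ∂νA := hsum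
        _ ≤ ∫⁻ x, (2 * max gM2 1 * ENNReal.ofReal ((1 - Real.exp (-1))⁻¹)) *
              ENNReal.ofReal (1 - Real.exp (-(x / ε ^ 2))) ∂νA :=
            lintegral_mono_ae (hae.mono fun x hx => key_le ε x hε hx)
        _ = _ := lintegral_const_mul _ hG
end

section
/- Let ε > 0, let ν be a nonnegative Borel measure on ℝ with ν({0}) = 0, ν(ℝ \ [−ε, ε]) = 0 and ∫ x² dν(x) < ∞, let σ² > 0 and b ∈ ℝ, and define g(u) := σ² u + b + ∫ (e^{ux} − 1) x dν(x). Then g has exactly one root: there is a unique u* ∈ ℝ with g(u*) = 0. -/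
open MeasureTheory Real Set

private lemma abs_exp_sub_one_le' (t : ℝ) : |Real.exp t - 1| ≤ |t| * Real.exp |t| := by
  rcases le_or_gt 0 t with ht | ht
  · rw [abs_of_nonneg ht, abs_of_nonneg (by linarith [Real.one_le_exp ht] : (0:ℝ) ≤ Real.exp t - 1)]
    have h1 := Real.add_one_le_exp (-t)
    have h2 := Real.exp_pos t
    have h3 : Real.exp (-t) * Real.exp t = 1 := by
      rw [← Real.exp_add]; simp
    nlinarith
  · rw [abs_of_neg ht, abs_of_nonpos (by linarith [Real.exp_le_one_iff.mpr ht.le] : Real.exp t - 1 ≤ 0)]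
    have h1 := Real.add_one_le_exp t
    have h2 := Real.one_le_exp (le_of_lt (neg_pos.mpr ht))
    nlinarith

/-- Case 1 (`σ ≠ 0`) in the proof of Lemma 3.2: for a Lévy measure `ν` supported in
`[−ε, ε]` with finite second moment and `σ² > 0`, the function
`g(u) = σ²u + b + ∫ (e^{ux} − 1)x dν` has exactly one root. -/
theorem stmt_16 (ε : ℝ) (hε : 0 < ε) (ν : Measure ℝ) (hν0 : ν {0} = 0)
    (hsupp : ν (Icc (-ε) ε)ᶜ = 0)
    (hmom : ∫⁻ x, ENNReal.ofReal (x ^ 2) ∂ν < ⊤)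
    (σ2 : ℝ) (hσ2 : 0 < σ2) (b : ℝ)
    (g : ℝ → ℝ)
    (hg : ∀ u : ℝ, g u = σ2 * u + b + ∫ x, (Real.exp (u * x) - 1) * x ∂ν) :
    ∃! u : ℝ, g u = 0 := by
  have hae : ∀ᵐ x ∂ν, x ∈ Icc (-ε) ε := by
    rw [ae_iff]
    exact hsupp
  have hx2 : Integrable (fun x : ℝ => x ^ 2) ν := by
    refine ⟨(continuous_pow 2).aestronglyMeasurable, ?_⟩
    rw [hasFiniteIntegral_iff_ofReal (Filter.Eventually.of_forall fun x => sq_nonneg x)]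
    exact hmom
  -- pointwise bound
  have hbound : ∀ (R u : ℝ), |u| ≤ R → ∀ x ∈ Icc (-ε) ε,
      ‖(Real.exp (u * x) - 1) * x‖ ≤ R * Real.exp (R * ε) * x ^ 2 := by
    intro R u hu x hx
    have hxε : |x| ≤ ε := abs_le.mpr ⟨hx.1, hx.2⟩
    have hR : 0 ≤ R := (abs_nonneg u).trans hu
    have h1 := abs_exp_sub_one_le' (u * x)
    have h2 : |u * x| ≤ R * ε := by
      rw [abs_mul]
      exact mul_le_mul hu hxε (abs_nonneg x) hR
    have h3 : Real.exp |u * x| ≤ Real.exp (R * ε) := Real.exp_le_exp.mpr h2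
    have h4 : |x| * |x| = x ^ 2 := by rw [← abs_mul, abs_mul_self]; ring
    calc ‖(Real.exp (u * x) - 1) * x‖ = |Real.exp (u * x) - 1| * |x| := abs_mul _ _
      _ ≤ (|u * x| * Real.exp |u * x|) * |x| :=
          mul_le_mul_of_nonneg_right h1 (abs_nonneg x)
      _ ≤ ((R * |x|) * Real.exp (R * ε)) * |x| := by
          have h5 : |u * x| ≤ R * |x| := by
            rw [abs_mul]; exact mul_le_mul_of_nonneg_right hu (abs_nonneg x)
          exact mul_le_mul_of_nonneg_right
            (mul_le_mul h5 h3 (Real.exp_pos _).le (mul_nonneg hR (abs_nonneg x))) (abs_nonneg x)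
      _ = R * Real.exp (R * ε) * x ^ 2 := by rw [← h4]; ring
  have hmeas : ∀ u : ℝ, AEStronglyMeasurable (fun x => (Real.exp (u * x) - 1) * x) ν := by
    intro u
    exact (((Real.continuous_exp.comp (continuous_const.mul continuous_id)).sub
      continuous_const).mul continuous_id).aestronglyMeasurable
  have hint : ∀ u : ℝ, Integrable (fun x => (Real.exp (u * x) - 1) * x) ν := by
    intro u
    refine (hx2.const_mul (|u| * Real.exp (|u| * ε))).mono' (hmeas u) ?_
    filter_upwards [hae] with x hx
    simpa [mul_assoc] using hbound |u| u le_rfl x hx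
  -- strict monotonicity
  have hmono : StrictMono g := by
    intro u v huv
    rw [hg u, hg v]
    have hle : ∫ x, (Real.exp (u * x) - 1) * x ∂ν ≤ ∫ x, (Real.exp (v * x) - 1) * x ∂ν := by
      refine integral_mono (hint u) (hint v) fun x => ?_
      rcases le_or_gt 0 x with hx | hx
      · have : Real.exp (u * x) ≤ Real.exp (v * x) :=
          Real.exp_le_exp.mpr (mul_le_mul_of_nonneg_right huv.le hx)
        exact mul_le_mul_of_nonneg_right (by linarith) hx
      · have : Real.exp (v * x) ≤ Real.exp (u * x) :=
          Real.exp_le_exp.mpr (mul_le_mul_of_nonpos_right huv.le hx.le)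
        exact mul_le_mul_of_nonpos_right (by linarith) hx.le
    have : σ2 * u < σ2 * v := by nlinarith
    linarith
  -- continuity
  have hcontI : Continuous fun u => ∫ x, (Real.exp (u * x) - 1) * x ∂ν := by
    rw [continuous_iff_continuousAt]
    intro u₀
    refine continuousAt_of_dominated (Filter.Eventually.of_forall hmeas)
      ?_ (hx2.const_mul ((|u₀| + 1) * Real.exp ((|u₀| + 1) * ε))) ?_
    · have hball : Metric.ball u₀ 1 ∈ nhds u₀ := Metric.ball_mem_nhds u₀ one_pos
      filter_upwards [hball] with u hu
      filter_upwards [hae] with x hx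
      have hu' : |u| ≤ |u₀| + 1 := by
        have : |u - u₀| < 1 := by rwa [Metric.mem_ball, Real.dist_eq] at hu
        have := abs_sub_abs_le_abs_sub u u₀
        linarith
      simpa [mul_assoc] using hbound (|u₀| + 1) u hu' x hx
    · refine Filter.Eventually.of_forall fun x => ?_
      exact (((Real.continuous_exp.comp (continuous_id.mul continuous_const)).sub
        continuous_const).mul continuous_const).continuousAt
  have hcont : Continuous g := by
    have : g = fun u => σ2 * u + b + ∫ x, (Real.exp (u * x) - 1) * x ∂ν := funext hg
    rw [this]
    exact ((continuous_const.mul continuous_id).add continuous_const).add hcontI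
  -- sign bounds
  have hposI : ∀ u : ℝ, 0 ≤ u → 0 ≤ ∫ x, (Real.exp (u * x) - 1) * x ∂ν := by
    intro u hu
    refine integral_nonneg fun x => ?_
    rcases le_or_gt 0 x with hx | hx
    · have : 1 ≤ Real.exp (u * x) := Real.one_le_exp (mul_nonneg hu hx)
      exact mul_nonneg (by linarith) hx
    · have : Real.exp (u * x) ≤ 1 := Real.exp_le_one_iff.mpr (mul_nonpos_of_nonneg_of_nonpos hu hx.le)
      show (0:ℝ) ≤ (Real.exp (u * x) - 1) * x
      nlinarith [mul_nonneg (by linarith : (0:ℝ) ≤ 1 - Real.exp (u * x)) (by linarith : (0:ℝ) ≤ -x)]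
  have hnegI : ∀ u : ℝ, u ≤ 0 → ∫ x, (Real.exp (u * x) - 1) * x ∂ν ≤ 0 := by
    intro u hu
    refine integral_nonpos fun x => ?_
    rcases le_or_gt 0 x with hx | hx
    · have : Real.exp (u * x) ≤ 1 := Real.exp_le_one_iff.mpr (mul_nonpos_of_nonpos_of_nonneg hu hx)
      exact mul_nonpos_of_nonpos_of_nonneg (by linarith) hx
    · have : 1 ≤ Real.exp (u * x) := Real.one_le_exp (by nlinarith)

      exact mul_nonpos_of_nonneg_of_nonpos (by linarith) hx.le
  set a : ℝ := min 0 ((-1 - b) / σ2) with ha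
  set c : ℝ := max 0 ((1 - b) / σ2) with hc
  have hac : a ≤ c := le_trans (min_le_left _ _) (le_max_left _ _)
  have hga : g a ≤ -1 := by
    rw [hg a]
    have h1 : a ≤ 0 := min_le_left _ _
    have h2 : a ≤ (-1 - b) / σ2 := min_le_right _ _
    have h3 : σ2 * a ≤ -1 - b := by
      have := mul_le_mul_of_nonneg_left h2 hσ2.le
      rwa [mul_div_cancel₀ _ hσ2.ne'] at this
    have := hnegI a h1
    linarith
  have hgc : 1 ≤ g c := by
    rw [hg c]
    have h1 : (0:ℝ) ≤ c := le_max_left _ _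
    have h2 : (1 - b) / σ2 ≤ c := le_max_right _ _
    have h3 : 1 - b ≤ σ2 * c := by
      have := mul_le_mul_of_nonneg_left h2 hσ2.le
      rwa [mul_div_cancel₀ _ hσ2.ne'] at this
    have := hposI c h1
    linarith
  have hmem : (0:ℝ) ∈ Icc (g a) (g c) := ⟨by linarith, by linarith⟩
  obtain ⟨u, _, hu⟩ := intermediate_value_Icc hac hcont.continuousOn hmem
  exact ⟨u, hu, fun y hy => hmono.injective (hy.trans hu.symm)⟩
end

section
/- Let ε > 0, let ν be a nonnegative Borel measure on ℝ with ν({0}) = 0 and ν(ℝ \ (0, ε]) = 0 (so ν is concentrated on (0, ε]), and suppose ∫ x dν(x) < ∞ and ν((0, ε]) > 0. Let b ∈ ℝ with b < ∫ x dν(x), and define g(u) := b + ∫ (e^{ux} − 1) x dν(x). Then g has exactly one root: there is a unique u* ∈ ℝ with g(u*) = 0. -/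
open MeasureTheory Real Set Filter

lemma stmt_18_bound {u C ε x : ℝ} (hu : |u| ≤ C) (hx : x ∈ Ioc (0 : ℝ) ε) :
    ‖(Real.exp (u * x) - 1) * x‖ ≤ (Real.exp (C * ε) + 1) * x := by
  have hx0 : 0 < x := hx.1
  have hxε : x ≤ ε := hx.2
  have h1 : u * x ≤ C * ε := by
    calc u * x ≤ |u| * x := by
          exact mul_le_mul_of_nonneg_right (le_abs_self u) hx0.le
    _ ≤ C * ε := by
          apply mul_le_mul hu hxε hx0.le
          exact le_trans (abs_nonneg u) hu
  have h2 : |Real.exp (u * x) - 1| ≤ Real.exp (C * ε) + 1 := by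
    have := Real.exp_pos (u * x)
    rw [abs_le]
    constructor
    · nlinarith [Real.exp_pos (C * ε)]
    · nlinarith [Real.exp_le_exp.mpr h1]
  calc ‖(Real.exp (u * x) - 1) * x‖ = |Real.exp (u * x) - 1| * x := by
        rw [norm_mul, Real.norm_eq_abs, Real.norm_eq_abs, abs_of_pos hx0]
  _ ≤ (Real.exp (C * ε) + 1) * x := mul_le_mul_of_nonneg_right h2 hx0.le

/-- Case 3(b) in the proof of Lemma 3.2: for a nonzero Lévy measure `ν` concentrated on
`(0, ε]` with finite first moment and `b < ∫ x dν`, the function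
`g(u) = b + ∫ (e^{ux} − 1)x dν` has exactly one root. -/
theorem stmt_18 (ε : ℝ) (hε : 0 < ε) (ν : Measure ℝ) (hν0 : ν {0} = 0)
    (hsupp : ν (Ioc (0 : ℝ) ε)ᶜ = 0)
    (hmom : Integrable (fun x : ℝ => x) ν)
    (hpos : 0 < ν (Ioc (0 : ℝ) ε))
    (b : ℝ) (hb : b < ∫ x, x ∂ν)
    (g : ℝ → ℝ)
    (hg : ∀ u : ℝ, g u = b + ∫ x, (Real.exp (u * x) - 1) * x ∂ν) :
    ∃! u : ℝ, g u = 0 := by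
  -- a.e. every point is in (0, ε]
  have hae : ∀ᵐ x ∂ν, x ∈ Ioc (0 : ℝ) ε := by
    rw [ae_iff]
    convert hsupp using 2
    rfl
  have hmeas : ∀ u : ℝ, AEStronglyMeasurable (fun x : ℝ => (Real.exp (u * x) - 1) * x) ν :=
    fun u => (((Real.continuous_exp.comp (continuous_const.mul continuous_id)).sub
      continuous_const).mul continuous_id).aestronglyMeasurable
  -- integrability of the integrand for each u
  have hint : ∀ u : ℝ, Integrable (fun x : ℝ => (Real.exp (u * x) - 1) * x) ν := by
    intro u
    refine (hmom.const_mul (Real.exp (|u| * ε) + 1)).mono' (hmeas u) ?_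
    filter_upwards [hae] with x hx
    exact stmt_18_bound le_rfl hx
  -- integrability of x ↦ x²
  have hint2 : Integrable (fun x : ℝ => x ^ 2) ν := by
    refine (hmom.const_mul ε).mono' (continuous_pow 2).aestronglyMeasurable ?_
    filter_upwards [hae] with x hx
    have hx0 : 0 < x := hx.1
    rw [Real.norm_eq_abs, abs_of_pos (pow_pos hx0 2)]
    nlinarith [hx.2]
  -- positivity of ∫ x²
  have hJpos : 0 < ∫ x, x ^ 2 ∂ν := by
    rw [integral_pos_iff_support_of_nonneg_ae ?_ hint2]
    · refine lt_of_lt_of_le hpos (measure_mono ?_)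
      intro x hx
      simp only [Function.mem_support]
      exact pow_ne_zero 2 (ne_of_gt hx.1)
    · filter_upwards [hae] with x hx
      positivity
  set I : ℝ := ∫ x, x ∂ν with hI
  set J : ℝ := ∫ x, x ^ 2 ∂ν with hJ
  -- g is strictly monotone
  have hmono : StrictMono g := by
    intro u v huv
    rw [hg u, hg v]
    have hvi : Integrable (fun x : ℝ => (Real.exp (v * x) - 1) * x - (Real.exp (u * x) - 1) * x) ν :=
      (hint v).sub (hint u)
    have key : 0 < ∫ x, ((Real.exp (v * x) - 1) * x - (Real.exp (u * x) - 1) * x) ∂ν := by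
      rw [integral_pos_iff_support_of_nonneg_ae ?_ hvi]
      · refine lt_of_lt_of_le hpos (measure_mono ?_)
        intro x hx
        have hx0 : 0 < x := hx.1
        have : Real.exp (u * x) < Real.exp (v * x) :=
          Real.exp_lt_exp.mpr (by nlinarith)
        simp only [Function.mem_support]
        intro h
        nlinarith
      · filter_upwards [hae] with x hx
        have hx0 : 0 < x := hx.1
        have : Real.exp (u * x) ≤ Real.exp (v * x) :=
          Real.exp_le_exp.mpr (by nlinarith)
        simp only [Pi.zero_apply]
        nlinarith
    rw [integral_sub (hint v) (hint u)] at key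
    linarith
  -- g is continuous
  have hcont : Continuous g := by
    rw [continuous_iff_continuousAt]
    intro u₀
    have : ContinuousAt (fun u : ℝ => ∫ x, (Real.exp (u * x) - 1) * x ∂ν) u₀ := by
      refine continuousAt_of_dominated (bound := fun x => (Real.exp ((|u₀| + 1) * ε) + 1) * x)
        (Filter.Eventually.of_forall hmeas) ?_ ?_ ?_
      · have hball : Metric.ball u₀ 1 ∈ nhds u₀ := Metric.ball_mem_nhds u₀ one_pos
        filter_upwards [hball] with u hu
        filter_upwards [hae] with x hx
        refine stmt_18_bound ?_ hx
        have : |u - u₀| < 1 := by simpa [Real.dist_eq] using hu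
        calc |u| = |u₀ + (u - u₀)| := by ring_nf
        _ ≤ |u₀| + |u - u₀| := abs_add_le _ _
        _ ≤ |u₀| + 1 := by linarith
      · exact hmom.const_mul _
      · filter_upwards [] with x
        exact ((Real.continuous_exp.comp (continuous_id.mul continuous_const)).sub
          continuous_const).continuousAt.mul continuousAt_const
    have h2 : ContinuousAt (fun u : ℝ => b + ∫ x, (Real.exp (u * x) - 1) * x ∂ν) u₀ :=
      continuousAt_const.add this
    exact h2.congr (Filter.Eventually.of_forall fun u => (hg u).symm)
  -- g(u) > 0 for large u
  have hub : ∃ u₂ : ℝ, 0 < g u₂ := by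
    refine ⟨(|b| + 1) / J, ?_⟩
    rw [hg]
    have hge : ((|b| + 1) / J) * J ≤ ∫ x, (Real.exp (((|b| + 1) / J) * x) - 1) * x ∂ν := by
      have : ∫ x, ((|b| + 1) / J) * x ^ 2 ∂ν ≤
          ∫ x, (Real.exp (((|b| + 1) / J) * x) - 1) * x ∂ν := by
        refine integral_mono_ae (hint2.const_mul _) (hint _) ?_
        filter_upwards [hae] with x hx
        have hx0 : 0 < x := hx.1
        have := Real.add_one_le_exp (((|b| + 1) / J) * x)
        nlinarith
      rwa [integral_const_mul, ← hJ] at this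
    have : ((|b| + 1) / J) * J = |b| + 1 := by
      field_simp
    nlinarith [le_abs_self b, neg_abs_le b]
  obtain ⟨u₂, hu₂⟩ := hub
  -- g(u) < 0 for very negative u
  have hlb : ∃ u₁ : ℝ, g u₁ < 0 := by
    have hlim : Tendsto (fun u : ℝ => ∫ x, (Real.exp (u * x) - 1) * x ∂ν) atBot
        (nhds (∫ x, -x ∂ν)) := by
      refine tendsto_integral_filter_of_dominated_convergence (bound := fun x => x)
        (Filter.Eventually.of_forall hmeas) ?_ hmom ?_
      · filter_upwards [Filter.eventually_le_atBot (0 : ℝ)] with u hu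
        filter_upwards [hae] with x hx
        have hx0 : 0 < x := hx.1
        have h1 : Real.exp (u * x) ≤ 1 := Real.exp_le_one_iff.mpr (by nlinarith)
        have h2 := Real.exp_pos (u * x)
        rw [norm_mul, Real.norm_eq_abs, Real.norm_eq_abs, abs_of_pos hx0]
        rw [abs_of_nonpos (by linarith)]
        nlinarith
      · filter_upwards [hae] with x hx
        have hx0 : 0 < x := hx.1
        have h1 : Tendsto (fun u : ℝ => u * x) atBot atBot :=
          Tendsto.atBot_mul_const hx0 tendsto_id
        have h2 : Tendsto (fun u : ℝ => Real.exp (u * x)) atBot (nhds 0) :=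
          Real.tendsto_exp_atBot.comp h1
        have h3 : Tendsto (fun u : ℝ => (Real.exp (u * x) - 1) * x) atBot
            (nhds ((0 - 1) * x)) := ((h2.sub tendsto_const_nhds).mul tendsto_const_nhds)
        simpa using h3
    rw [integral_neg] at hlim
    have hglim : Tendsto g atBot (nhds (b + -I)) := by
      refine Tendsto.congr (fun u => (hg u).symm) (tendsto_const_nhds.add hlim)
    have hneg : b + -I < 0 := by simp only [hI]; linarith
    have := hglim.eventually (gt_mem_nhds hneg)
    exact this.exists
  obtain ⟨u₁, hu₁⟩ := hlb
  have h12 : u₁ ≤ u₂ := le_of_lt (hmono.lt_iff_lt.mp (lt_trans hu₁ hu₂))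
  obtain ⟨u, hu_mem, hu⟩ := intermediate_value_Icc h12 hcont.continuousOn
    (⟨le_of_lt hu₁, le_of_lt hu₂⟩ : (0 : ℝ) ∈ Icc (g u₁) (g u₂))
  exact ⟨u, hu, fun v hv => hmono.injective (hv.trans hu.symm)⟩
end
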